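/- arXiv:1005.5143 — 3 statements merged into one kernel-verified Lean document; each statement's English description precedes it below -/
import Mathlib

section
/- Let G be a countable group with a sofic approximation sequence Σ = {σ_i : G → Sym(d_i)}. Let (X, μ) be a standard probability space and let R be a finite measurable partition of X. Then for every nonempty finite subset F of G and every δ > 0, one has limsup_{i→∞} (1/d_i) · log of the cardinality of the set of all maps β : {1,…,d_i} → R such that ∑_{φ ∈ R^F} | ∏_{g∈F} μ(φ(g)) − ζ( ⋂_{g∈F} σ_i(g)(β^{-1}(φ(g))) ) | ≤ δ is at least H_μ(R). (Here β^{-1}(R') denotes {k ∈ {1,…,d_i} : β(k) = R'} and σ_i(g)(A) denotes the image of the set A under the permutation σ_i(g).) -/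
open Filter MeasureTheory

/-- A sofic approximation sequence for a group `G`: a sequence of maps
`σ i : G → Sym({1,…,d i})` with `d i → ∞` which is asymptotically multiplicative and
asymptotically free. -/
structure SoficApproxSeq (G : Type*) [Group G] where
  d : ℕ → ℕ
  d_pos : ∀ i, 0 < d i
  σ : ∀ i, G → Equiv.Perm (Fin (d i))
  d_tendsto : Tendsto d atTop atTop
  almost_mul : ∀ s t : G,
    Tendsto (fun i =>
        (({k : Fin (d i) | σ i (s * t) k = σ i s (σ i t k)}.ncard : ℝ) / d i))
      atTop (nhds 1)
  almost_free : ∀ s t : G, s ≠ t →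
    Tendsto (fun i =>
        (({k : Fin (d i) | σ i s k ≠ σ i t k}.ncard : ℝ) / d i))
      atTop (nhds 1)


open Filter MeasureTheory Finset

set_option linter.unusedSectionVars false

namespace BowenAux

variable {ι K : Type*} [Fintype ι] [Fintype K] [DecidableEq ι] [DecidableEq K]

/-- product weight: probability of `β` under i.i.d. with marginals `p`. -/
noncomputable def pw (p : ι → ℝ) (β : K → ι) : ℝ := ∏ k, p (β k)

/-- expectation -/
noncomputable def fexp (p : ι → ℝ) (f : (K → ι) → ℝ) : ℝ := ∑ β : K → ι, pw p β * f β

variable {p : ι → ℝ}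

lemma pw_nonneg (hp0 : ∀ r, 0 ≤ p r) (β : K → ι) : 0 ≤ pw p β :=
  Finset.prod_nonneg fun _ _ => hp0 _

lemma sum_pw (hp1 : ∑ r, p r = 1) : ∑ β : K → ι, pw p β = 1 := by
  simp only [pw]
  rw [show (∑ β : K → ι, ∏ k, p (β k)) = ∏ _k : K, ∑ r, p r from
    (Fintype.prod_sum (fun (_ : K) (r : ι) => p r)).symm]
  simp [hp1]

lemma fexp_const (hp1 : ∑ r, p r = 1) (c : ℝ) : fexp p (fun _ : K → ι => c) = c := by
  rw [fexp]
  rw [← Finset.sum_mul, sum_pw hp1, one_mul]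

lemma fexp_add (f g : (K → ι) → ℝ) :
    fexp p (fun β => f β + g β) = fexp p f + fexp p g := by
  simp [fexp, mul_add, Finset.sum_add_distrib]

lemma fexp_sub (f g : (K → ι) → ℝ) :
    fexp p (fun β => f β - g β) = fexp p f - fexp p g := by
  simp [fexp, mul_sub, Finset.sum_sub_distrib]

lemma fexp_const_mul (c : ℝ) (f : (K → ι) → ℝ) :
    fexp p (fun β => c * f β) = c * fexp p f := by
  simp [fexp, Finset.mul_sum]; congr 1; ext β; ring

lemma fexp_sum {κ : Type*} (s : Finset κ) (f : κ → (K → ι) → ℝ) :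
    fexp p (fun β => ∑ j ∈ s, f j β) = ∑ j ∈ s, fexp p (f j) := by
  simp [fexp, Finset.mul_sum]
  exact Finset.sum_comm

lemma fexp_mono (hp0 : ∀ r, 0 ≤ p r) {f g : (K → ι) → ℝ} (h : ∀ β, f β ≤ g β) :
    fexp p f ≤ fexp p g :=
  Finset.sum_le_sum fun β _ => mul_le_mul_of_nonneg_left (h β) (pw_nonneg hp0 β)

lemma fexp_nonneg (hp0 : ∀ r, 0 ≤ p r) {f : (K → ι) → ℝ} (h : ∀ β, 0 ≤ f β) :
    0 ≤ fexp p f :=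
  Finset.sum_nonneg fun β _ => mul_nonneg (pw_nonneg hp0 β) (h β)

lemma abs_fexp_le (hp0 : ∀ r, 0 ≤ p r) (hp1 : ∑ r, p r = 1) {f : (K → ι) → ℝ}
    (h : ∀ β, |f β| ≤ 1) : |fexp p f| ≤ 1 := by
  calc |fexp p f| ≤ ∑ β : K → ι, |pw p β * f β| := Finset.abs_sum_le_sum_abs _ _
    _ ≤ ∑ β : K → ι, pw p β * 1 := by
        refine Finset.sum_le_sum fun β _ => ?_
        rw [abs_mul, abs_of_nonneg (pw_nonneg hp0 β)]
        exact mul_le_mul_of_nonneg_left (h β) (pw_nonneg hp0 β)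
    _ = 1 := by rw [← Finset.sum_mul, sum_pw hp1, one_mul]

/-- Cauchy–Schwarz: `E|f| ≤ √(E f²)`. -/
lemma fexp_abs_le_sqrt (hp0 : ∀ r, 0 ≤ p r) (hp1 : ∑ r, p r = 1) (f : (K → ι) → ℝ) :
    fexp p (fun β => |f β|) ≤ Real.sqrt (fexp p (fun β => f β ^ 2)) := by
  have key : (fexp p (fun β => |f β|)) ^ 2 ≤ fexp p (fun β => f β ^ 2) := by
    have cs := Finset.sum_mul_sq_le_sq_mul_sq Finset.univ
      (fun β : K → ι => Real.sqrt (pw p β)) (fun β => Real.sqrt (pw p β) * |f β|)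
    have e1 : ∀ β : K → ι, Real.sqrt (pw p β) * (Real.sqrt (pw p β) * |f β|)
        = pw p β * |f β| := by
      intro β
      rw [← mul_assoc, Real.mul_self_sqrt (pw_nonneg hp0 β)]
    have e2 : ∀ β : K → ι, Real.sqrt (pw p β) ^ 2 = pw p β := fun β =>
      Real.sq_sqrt (pw_nonneg hp0 β)
    have e3 : ∀ β : K → ι, (Real.sqrt (pw p β) * |f β|) ^ 2 = pw p β * f β ^ 2 := by
      intro β
      rw [mul_pow, e2 β, sq_abs]
    simp only [e1, e2, e3] at cs
    calc (fexp p fun β => |f β|) ^ 2 = (∑ β : K → ι, pw p β * |f β|) ^ 2 := rfl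
      _ ≤ (∑ β : K → ι, pw p β) * ∑ β : K → ι, pw p β * f β ^ 2 := cs
      _ = fexp p (fun β => f β ^ 2) := by rw [sum_pw hp1, one_mul]; rfl
  have h0 : 0 ≤ fexp p (fun β => |f β|) := fexp_nonneg hp0 fun β => abs_nonneg _
  calc fexp p (fun β => |f β|) = Real.sqrt ((fexp p fun β => |f β|) ^ 2) :=
        (Real.sqrt_sq h0).symm
    _ ≤ Real.sqrt (fexp p (fun β => f β ^ 2)) := Real.sqrt_le_sqrt key

/-- Markov's inequality, in "good mass" form. -/
lemma markov (hp0 : ∀ r, 0 ≤ p r) (hp1 : ∑ r, p r = 1) {f : (K → ι) → ℝ}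
    (hf : ∀ β, 0 ≤ f β) {t : ℝ} (ht : 0 < t) :
    1 - fexp p f / t ≤ ∑ β ∈ Finset.univ.filter (fun β : K → ι => f β ≤ t), pw p β := by
  have hsplit := Finset.sum_filter_add_sum_filter_not Finset.univ
    (fun β : K → ι => f β ≤ t) (pw p)
  have hbad : ∑ β ∈ Finset.univ.filter (fun β : K → ι => ¬ f β ≤ t), pw p β
      ≤ fexp p f / t := by
    rw [le_div_iff₀ ht]
    calc (∑ β ∈ Finset.univ.filter (fun β : K → ι => ¬ f β ≤ t), pw p β) * t
        = ∑ β ∈ Finset.univ.filter (fun β : K → ι => ¬ f β ≤ t), pw p β * t := by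
          rw [Finset.sum_mul]
      _ ≤ ∑ β ∈ Finset.univ.filter (fun β : K → ι => ¬ f β ≤ t), pw p β * f β := by
          refine Finset.sum_le_sum fun β hβ => ?_
          have : t ≤ f β := le_of_lt (lt_of_not_ge (Finset.mem_filter.mp hβ).2)
          exact mul_le_mul_of_nonneg_left this (pw_nonneg hp0 β)
      _ ≤ ∑ β : K → ι, pw p β * f β := by
          refine Finset.sum_le_sum_of_subset_of_nonneg (Finset.filter_subset _ _) ?_
          intro β _ _
          exact mul_nonneg (pw_nonneg hp0 β) (hf β)
      _ = fexp p f := rfl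
  have := sum_pw (K := K) hp1
  linarith [hsplit, hbad]

end BowenAux

section Part2
namespace BowenAux
open Finset
variable {ι K : Type*} [Fintype ι] [Fintype K] [DecidableEq ι] [DecidableEq K]
variable {p : ι → ℝ}

/-- Expectation of a product of functions of distinct coordinates factorizes. -/
lemma exp_prod (hp1 : ∑ r, p r = 1) {κ : Type*} [Fintype κ] [DecidableEq κ]
    (c : κ → K) (hc : Function.Injective c) (f : κ → ι → ℝ) :
    fexp p (fun β => ∏ j, f j (β (c j))) = ∏ j, ∑ r, p r * f j r := by
  set Fx : K → ι → ℝ := Function.extend c f (fun _ _ => 1) with hFx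
  have hFc : ∀ j, Fx (c j) = f j := fun j => hc.extend_apply _ _ _
  have hFnot : ∀ k, k ∉ Finset.univ.image c → Fx k = fun _ => 1 := by
    intro k hk
    apply Function.extend_apply'
    rintro ⟨j, rfl⟩
    exact hk (Finset.mem_image_of_mem c (Finset.mem_univ j))
  have key : ∀ β : K → ι, (∏ j, f j (β (c j))) = ∏ k, Fx k (β k) := by
    intro β
    rw [← Finset.prod_subset (Finset.subset_univ (Finset.univ.image c))
      (fun k _ hk => by rw [hFnot k hk])]
    rw [Finset.prod_image (fun a _ b _ h => hc h)]
    exact Finset.prod_congr rfl fun j _ => by rw [hFc]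
  have step1 : fexp p (fun β => ∏ j, f j (β (c j)))
      = ∑ β : K → ι, ∏ k, (p (β k) * Fx k (β k)) := by
    refine Finset.sum_congr rfl fun β _ => ?_
    dsimp only
    rw [key β, Finset.prod_mul_distrib]
    rfl
  rw [step1,
    show (∑ β : K → ι, ∏ k, (p (β k) * Fx k (β k))) = ∏ k : K, ∑ r, p r * Fx k r from
      (Fintype.prod_sum (fun (k : K) (r : ι) => p r * Fx k r)).symm]
  rw [← Finset.prod_subset (Finset.subset_univ (Finset.univ.image c))
    (fun k _ hk => by rw [hFnot k hk]; simp [hp1])]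
  rw [Finset.prod_image (fun a _ b _ h => hc h)]
  exact Finset.prod_congr rfl fun j _ => by rw [hFc]

/-- Expectation of a product of indicators over distinct coordinates. -/
lemma exp_ind_prod (hp1 : ∑ r, p r = 1) {κ : Type*} [Fintype κ] [DecidableEq κ]
    (c : κ → K) (hc : Function.Injective c) (φ : κ → ι) :
    fexp p (fun β => ∏ j, (if β (c j) = φ j then (1:ℝ) else 0)) = ∏ j, p (φ j) := by
  rw [exp_prod hp1 c hc (fun j r => if r = φ j then (1:ℝ) else 0)]
  refine Finset.prod_congr rfl fun j _ => ?_
  simp [mul_ite, mul_one, mul_zero, Finset.sum_ite_eq']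

end BowenAux
end Part2

section Part3
namespace BowenAux
open Finset
variable {ι K : Type*} [Fintype ι] [Fintype K] [DecidableEq ι] [DecidableEq K]
variable {p : ι → ℝ}

lemma cov_zero (hp1 : ∑ r, p r = 1) {Z Z' : (K → ι) → ℝ} {m m' : ℝ}
    (h1 : fexp p Z = m) (h2 : fexp p Z' = m')
    (h12 : fexp p (fun β => Z β * Z' β) = m * m') :
    fexp p (fun β => (Z β - m) * (Z' β - m')) = 0 := by
  have e : ∀ β, (Z β - m) * (Z' β - m')
      = (Z β * Z' β - m' * Z β) - (m * Z' β - m * m') := by intro β; ring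
  calc fexp p (fun β => (Z β - m) * (Z' β - m'))
      = fexp p (fun β => (Z β * Z' β - m' * Z β) - (m * Z' β - m * m')) := by
        exact Finset.sum_congr rfl fun β _ => by dsimp only; rw [e β]
    _ = (fexp p (fun β => Z β * Z' β) - fexp p (fun β => m' * Z β))
        - (fexp p (fun β => m * Z' β) - fexp p (fun _ => m * m')) := by
        rw [fexp_sub, fexp_sub, fexp_sub]
    _ = 0 := by
        rw [fexp_const_mul, fexp_const_mul, fexp_const hp1, h1, h2, h12]; ring

/-- Second moment bound: if covariances vanish off an exceptional set `BP` of pairs and the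
variables are uniformly within `1` of `m`, then `E (∑ Z k - d m)² ≤ |BP|`. -/
lemma fexp_sq_sum_le (hp0 : ∀ r, 0 ≤ p r) (hp1 : ∑ r, p r = 1)
    (Z : K → (K → ι) → ℝ) (m : ℝ) (hZ : ∀ k β, |Z k β - m| ≤ 1)
    (BP : Finset (K × K))
    (h0 : ∀ k k', (k, k') ∉ BP →
      fexp p (fun β => (Z k β - m) * (Z k' β - m)) = 0) :
    fexp p (fun β => (∑ k, Z k β - (Fintype.card K : ℝ) * m) ^ 2) ≤ BP.card := by
  have e : ∀ β, (∑ k, Z k β - (Fintype.card K : ℝ) * m) ^ 2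
      = ∑ kk : K × K, (Z kk.1 β - m) * (Z kk.2 β - m) := by
    intro β
    have : ∑ k, Z k β - (Fintype.card K : ℝ) * m = ∑ k, (Z k β - m) := by
      rw [Finset.sum_sub_distrib]
      simp [Finset.card_univ, mul_comm]
    rw [this, sq, Finset.sum_mul_sum, Fintype.sum_prod_type]
  have lin : fexp p (fun β => (∑ k, Z k β - (Fintype.card K : ℝ) * m) ^ 2)
      = ∑ kk : K × K, fexp p (fun β => (Z kk.1 β - m) * (Z kk.2 β - m)) := by
    rw [show (fun β : K → ι => (∑ k, Z k β - (Fintype.card K : ℝ) * m) ^ 2)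
        = fun β => ∑ kk : K × K, (Z kk.1 β - m) * (Z kk.2 β - m) from funext e]
    exact fexp_sum Finset.univ _
  rw [lin]
  have hzero : ∀ kk ∈ Finset.univ (α := K × K),
      kk ∉ Finset.univ.filter (fun kk : K × K => kk ∈ BP) →
      fexp p (fun β => (Z kk.1 β - m) * (Z kk.2 β - m)) = 0 := by
    intro kk _ hkk
    simp only [Finset.mem_filter, Finset.mem_univ, true_and] at hkk
    exact h0 kk.1 kk.2 hkk
  rw [← Finset.sum_subset (Finset.filter_subset _ _) hzero]
  have habs : ∀ kk ∈ Finset.univ.filter (fun kk : K × K => kk ∈ BP),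
      fexp p (fun β => (Z kk.1 β - m) * (Z kk.2 β - m)) ≤ 1 := by
    intro kk _
    have := abs_fexp_le hp0 hp1 (f := fun β => (Z kk.1 β - m) * (Z kk.2 β - m))
      (fun β => by
        rw [abs_mul]
        exact mul_le_one₀ (hZ _ _) (abs_nonneg _) (hZ _ _))
    exact le_trans (le_abs_self _) this
  calc ∑ kk ∈ Finset.univ.filter (fun kk : K × K => kk ∈ BP),
        fexp p (fun β => (Z kk.1 β - m) * (Z kk.2 β - m))
      ≤ ∑ _kk ∈ Finset.univ.filter (fun kk : K × K => kk ∈ BP), (1:ℝ) :=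
        Finset.sum_le_sum habs
    _ = (Finset.univ.filter (fun kk : K × K => kk ∈ BP)).card := by simp
    _ ≤ (BP.card : ℝ) := by
        have : Finset.univ.filter (fun kk : K × K => kk ∈ BP) ⊆ BP := fun kk hkk =>
          (Finset.mem_filter.mp hkk).2
        exact_mod_cast Finset.card_le_card this

end BowenAux
end Part3

section Part4
namespace BowenAux
open Finset
variable {ι K κ : Type*} [Fintype ι] [Fintype K] [DecidableEq ι] [DecidableEq K]
  [Fintype κ] [DecidableEq κ] {p : ι → ℝ}

lemma p_le_one (hp0 : ∀ r, 0 ≤ p r) (hp1 : ∑ r, p r = 1) (r : ι) : p r ≤ 1 := by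
  rw [← hp1]
  exact Finset.single_le_sum (fun s _ => hp0 s) (Finset.mem_univ r)

lemma prod_p_mem (hp0 : ∀ r, 0 ≤ p r) (hp1 : ∑ r, p r = 1) (φ : κ → ι) :
    0 ≤ ∏ j, p (φ j) ∧ ∏ j, p (φ j) ≤ 1 :=
  ⟨Finset.prod_nonneg fun j _ => hp0 _,
   Finset.prod_le_one (fun j _ => hp0 _) (fun j _ => p_le_one hp0 hp1 _)⟩

lemma exp_ind_forall_eq (hp1 : ∑ r, p r = 1) (τ : κ → Equiv.Perm K) (k : K)
    (hk : Function.Injective fun j => τ j k) (φ : κ → ι) :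
    fexp p (fun β => if (∀ j, β (τ j k) = φ j) then (1:ℝ) else 0) = ∏ j, p (φ j) := by
  rw [← exp_ind_prod hp1 (fun j => τ j k) hk φ]
  refine Finset.sum_congr rfl fun β _ => ?_
  dsimp only
  rw [Fintype.prod_boole]

lemma exp_ind_forall_eq_pair (hp1 : ∑ r, p r = 1) (τ : κ → Equiv.Perm K) (k k' : K)
    (hkk' : Function.Injective (Sum.elim (fun j : κ => τ j k) (fun j : κ => τ j k')))
    (φ : κ → ι) :
    fexp p (fun β => (if (∀ j, β (τ j k) = φ j) then (1:ℝ) else 0) *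
        (if (∀ j, β (τ j k') = φ j) then (1:ℝ) else 0))
      = (∏ j, p (φ j)) * ∏ j, p (φ j) := by
  have h := exp_ind_prod hp1
    (Sum.elim (fun j : κ => τ j k) (fun j : κ => τ j k')) hkk' (Sum.elim φ φ)
  rw [show (∏ x : κ ⊕ κ, p (Sum.elim φ φ x)) = (∏ j, p (φ j)) * ∏ j, p (φ j) by
    rw [Fintype.prod_sum_type]; simp] at h
  rw [← h]
  refine Finset.sum_congr rfl fun β _ => ?_
  dsimp only
  rw [Fintype.prod_sum_type]
  simp only [Sum.elim_inl, Sum.elim_inr, Fintype.prod_boole]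
  congr 2 <;> exact Fintype.prod_boole.symm

/-- Pairs `(k,k')` where the combined coordinate map fails to be injective. -/
def badPairs (τ : κ → Equiv.Perm K) : Finset (K × K) :=
  Finset.univ.filter (fun kk : K × K =>
    ¬ Function.Injective (Sum.elim (fun j : κ => τ j kk.1) (fun j : κ => τ j kk.2)))

lemma moment_X (hp0 : ∀ r, 0 ≤ p r) (hp1 : ∑ r, p r = 1) (τ : κ → Equiv.Perm K)
    (φ : κ → ι) :
    fexp p (fun β => ((∑ k, if (∀ j, β (τ j k) = φ j) then (1:ℝ) else 0) -
        (Fintype.card K : ℝ) * ∏ j, p (φ j)) ^ 2) ≤ ((badPairs τ).card : ℝ) := by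
  obtain ⟨hm0, hm1⟩ := prod_p_mem hp0 hp1 φ
  refine fexp_sq_sum_le hp0 hp1 _ _ ?_ (badPairs τ) ?_
  · intro k β
    split <;> rw [abs_le] <;> constructor <;> linarith
  · intro k k' hkk'
    have hinj : Function.Injective
        (Sum.elim (fun j : κ => τ j k) (fun j : κ => τ j k')) := by
      by_contra h
      exact hkk' (Finset.mem_filter.mpr ⟨Finset.mem_univ _, h⟩)
    have hk : Function.Injective fun j : κ => τ j k := by
      intro a b hab
      have := @hinj (Sum.inl a) (Sum.inl b) (by simpa using hab)
      simpa using this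
    have hk' : Function.Injective fun j : κ => τ j k' := by
      intro a b hab
      have := @hinj (Sum.inr a) (Sum.inr b) (by simpa using hab)
      simpa using this
    exact cov_zero hp1 (exp_ind_forall_eq hp1 τ k hk φ)
      (exp_ind_forall_eq hp1 τ k' hk' φ)
      (exp_ind_forall_eq_pair hp1 τ k k' hinj φ)

lemma badPairs_card_le (τ : κ → Equiv.Perm K) :
    (badPairs τ).card ≤
      (2 * (Finset.univ.filter fun k : K =>
          ¬ Function.Injective fun j : κ => τ j k).card + Fintype.card κ ^ 2)
        * Fintype.card K := by
  classical
  set Bad : Finset K :=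
    Finset.univ.filter fun k : K => ¬ Function.Injective fun j : κ => τ j k with hBad
  set T : Finset (K × K) :=
    Finset.univ.image (fun x : (κ × κ) × K => (x.2, (τ x.1.2).symm (τ x.1.1 x.2))) with hT
  have hsub : badPairs τ ⊆ (Bad ×ˢ Finset.univ ∪ Finset.univ ×ˢ Bad) ∪ T := by
    intro kk hkk
    have hni : ¬ Function.Injective
        (Sum.elim (fun j : κ => τ j kk.1) (fun j : κ => τ j kk.2)) :=
      (Finset.mem_filter.mp hkk).2
    by_cases h1 : Function.Injective fun j : κ => τ j kk.1
    · by_cases h2 : Function.Injective fun j : κ => τ j kk.2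
      · have cross : ∃ j j' : κ, τ j kk.1 = τ j' kk.2 := by
          by_contra hc
          push_neg at hc
          apply hni
          intro x y hxy
          rcases x with a | a <;> rcases y with b | b
          · simp only [Sum.elim_inl] at hxy
            rw [h1 hxy]
          · exact absurd hxy (hc a b)
          · exact absurd hxy.symm (hc b a)
          · simp only [Sum.elim_inr] at hxy
            rw [h2 hxy]
        obtain ⟨j, j', hjj'⟩ := cross
        refine Finset.mem_union_right _ ?_
        refine Finset.mem_image.mpr ⟨((j, j'), kk.1), Finset.mem_univ _, ?_⟩
        have : (τ j').symm (τ j kk.1) = kk.2 := by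
          rw [hjj']
          exact (τ j').symm_apply_apply _
        simp [this]
      · refine Finset.mem_union_left _ (Finset.mem_union_right _ ?_)
        refine Finset.mem_product.mpr ⟨Finset.mem_univ _, ?_⟩
        simp [hBad, h2]
    · refine Finset.mem_union_left _ (Finset.mem_union_left _ ?_)
      refine Finset.mem_product.mpr ⟨?_, Finset.mem_univ _⟩
      simp [hBad, h1]
  calc (badPairs τ).card ≤ ((Bad ×ˢ Finset.univ ∪ Finset.univ ×ˢ Bad) ∪ T).card :=
        Finset.card_le_card hsub
    _ ≤ (Bad ×ˢ Finset.univ ∪ Finset.univ ×ˢ Bad).card + T.card :=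
        Finset.card_union_le _ _
    _ ≤ ((Bad ×ˢ Finset.univ).card + (Finset.univ ×ˢ Bad).card) + T.card := by
        exact Nat.add_le_add_right (Finset.card_union_le _ _) _
    _ ≤ (Bad.card * Fintype.card K + Fintype.card K * Bad.card)
        + Fintype.card κ ^ 2 * Fintype.card K := by
        refine Nat.add_le_add (le_of_eq ?_) ?_
        · rw [Finset.card_product, Finset.card_product]
          simp [Finset.card_univ]
        · calc T.card ≤ (Finset.univ : Finset ((κ × κ) × K)).card :=
              Finset.card_image_le
            _ = Fintype.card ((κ × κ) × K) := Finset.card_univ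
            _ = Fintype.card κ ^ 2 * Fintype.card K := by
              rw [Fintype.card_prod, Fintype.card_prod, sq]
    _ = (2 * Bad.card + Fintype.card κ ^ 2) * Fintype.card K := by ring

lemma exp_ind_single (hp1 : ∑ r, p r = 1) (k : K) (r : ι) :
    fexp p (fun β => if β k = r then (1:ℝ) else 0) = p r := by
  have h := exp_ind_prod (κ := Unit) hp1 (fun _ => k)
    (fun a b _ => Subsingleton.elim a b) (fun _ => r)
  simpa using h

lemma exp_ind_pair (hp1 : ∑ r, p r = 1) {k k' : K} (h : k ≠ k') (r : ι) :
    fexp p (fun β => (if β k = r then (1:ℝ) else 0) * (if β k' = r then (1:ℝ) else 0))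
      = p r * p r := by
  have hinj : Function.Injective fun b : Bool => cond b k k' := by
    intro a b hab
    cases a <;> cases b <;> simp_all
  have hh := exp_ind_prod (κ := Bool) hp1 (fun b => cond b k k') hinj (fun _ => r)
  rw [show (∏ _j : Bool, p r) = p r * p r by rw [Fintype.prod_bool]] at hh
  rw [← hh]
  refine Finset.sum_congr rfl fun β _ => ?_
  dsimp only
  rw [Fintype.prod_bool]
  simp

lemma moment_M (hp0 : ∀ r, 0 ≤ p r) (hp1 : ∑ r, p r = 1) (r : ι) :
    fexp p (fun β => ((∑ k : K, if β k = r then (1:ℝ) else 0) -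
        (Fintype.card K : ℝ) * p r) ^ 2) ≤ (Fintype.card K : ℝ) := by
  have hp0r := hp0 r
  have hp1r := p_le_one hp0 hp1 r
  have key := fexp_sq_sum_le hp0 hp1 (fun k β => if β k = r then (1:ℝ) else 0) (p r)
    (by
      intro k β
      split <;> rw [abs_le] <;> constructor <;> linarith)
    (Finset.univ.image fun k : K => (k, k))
    (by
      intro k k' hkk'
      have hne : k ≠ k' := by
        rintro rfl
        exact hkk' (Finset.mem_image.mpr ⟨k, Finset.mem_univ _, rfl⟩)
      exact cov_zero hp1 (exp_ind_single hp1 k r) (exp_ind_single hp1 k' r)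
        (exp_ind_pair hp1 hne r))
  refine le_trans key ?_
  exact_mod_cast Nat.cast_le.mpr (le_trans Finset.card_image_le (le_of_eq Finset.card_univ))
end BowenAux
end Part4

section Part5
namespace BowenAux
open Finset
variable {ι K : Type*} [Fintype ι] [Fintype K] [DecidableEq ι] [DecidableEq K] {p : ι → ℝ}

lemma pw_eq_prod_pow (β : K → ι) :
    pw p β = ∏ r : ι, p r ^ (Finset.univ.filter fun k => β k = r).card := by
  rw [pw, Finset.prod_comp p β]
  refine Finset.prod_subset (Finset.subset_univ _) fun r _ hr => ?_
  have : (Finset.univ.filter fun k => β k = r) = ∅ := by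
    refine Finset.filter_eq_empty_iff.mpr fun k _ => ?_
    intro hk
    exact hr (Finset.mem_image.mpr ⟨k, Finset.mem_univ _, hk⟩)
  rw [this]
  simp

lemma pw_le_typ (hp0 : ∀ r, 0 ≤ p r) {ε : ℝ} (hε : 0 ≤ ε) (β : K → ι)
    (htyp : ∀ r : ι, |((Finset.univ.filter fun k => β k = r).card : ℝ) -
        (Fintype.card K : ℝ) * p r| ≤ ε * Fintype.card K) :
    pw p β ≤ Real.exp ((Fintype.card K : ℝ) *
      ((∑ r, p r * Real.log (p r)) + ε * ∑ r, |Real.log (p r)|)) := by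
  classical
  set d : ℝ := (Fintype.card K : ℝ) with hd
  set cnt : ι → ℕ := fun r => (Finset.univ.filter fun k => β k = r).card with hcnt
  by_cases hz : ∃ r, p r = 0 ∧ cnt r ≠ 0
  · obtain ⟨r, hpr, hcr⟩ := hz
    have : pw p β = 0 := by
      rw [pw_eq_prod_pow]
      exact Finset.prod_eq_zero (Finset.mem_univ r) (by rw [hpr, zero_pow hcr])
    rw [this]
    exact le_of_lt (Real.exp_pos _)
  · push_neg at hz
    have hfac : ∀ r : ι, 0 < p r ^ cnt r := by
      intro r
      rcases eq_or_lt_of_le (hp0 r) with h | h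
      · rw [hz r h.symm, pow_zero]; exact one_pos
      · exact pow_pos h _
    have hpos : 0 < pw p β := by
      rw [pw_eq_prod_pow]
      exact Finset.prod_pos fun r _ => hfac r
    have hlog : Real.log (pw p β) = ∑ r, (cnt r : ℝ) * Real.log (p r) := by
      rw [pw_eq_prod_pow, Real.log_prod fun r _ => ne_of_gt (hfac r)]
      exact Finset.sum_congr rfl fun r _ => Real.log_pow _ _
    have hbound : Real.log (pw p β) ≤ d * ((∑ r, p r * Real.log (p r)) +
        ε * ∑ r, |Real.log (p r)|) := by
      rw [hlog]
      have key : ∀ r : ι, (cnt r : ℝ) * Real.log (p r)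
          ≤ d * (p r * Real.log (p r)) + ε * d * |Real.log (p r)| := by
        intro r
        have h1 : (cnt r : ℝ) * Real.log (p r) - d * (p r * Real.log (p r))
            = ((cnt r : ℝ) - d * p r) * Real.log (p r) := by ring
        have h2 : ((cnt r : ℝ) - d * p r) * Real.log (p r)
            ≤ |(cnt r : ℝ) - d * p r| * |Real.log (p r)| := by
          rw [← abs_mul]
          exact le_abs_self _
        have h3 : |(cnt r : ℝ) - d * p r| * |Real.log (p r)|
            ≤ (ε * d) * |Real.log (p r)| :=
          mul_le_mul_of_nonneg_right (htyp r) (abs_nonneg _)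
        nlinarith [h2, h3]
      calc ∑ r, (cnt r : ℝ) * Real.log (p r)
          ≤ ∑ r, (d * (p r * Real.log (p r)) + ε * d * |Real.log (p r)|) :=
            Finset.sum_le_sum fun r _ => key r
        _ = d * ((∑ r, p r * Real.log (p r)) + ε * ∑ r, |Real.log (p r)|) := by
            rw [Finset.sum_add_distrib, ← Finset.mul_sum, ← Finset.mul_sum]
            ring
    calc pw p β = Real.exp (Real.log (pw p β)) := (Real.exp_log hpos).symm
      _ ≤ _ := Real.exp_le_exp.mpr hbound

end BowenAux
end Part5

section Part6
namespace BowenAux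
open Finset
variable {ι K κ : Type*} [Fintype ι] [Fintype K] [DecidableEq ι] [DecidableEq K]
  [Fintype κ] [DecidableEq κ] {p : ι → ℝ}

/-- mass of the intersection of two events is at least the sum of masses minus 1. -/
lemma mass_inter_ge (hp0 : ∀ r, 0 ≤ p r) (hp1 : ∑ r, p r = 1) (s t : Finset (K → ι)) :
    (∑ β ∈ s, pw p β) + (∑ β ∈ t, pw p β) - 1 ≤ ∑ β ∈ s ∩ t, pw p β := by
  have h1 : (∑ β ∈ s ∪ t, pw p β) + ∑ β ∈ s ∩ t, pw p β
      = (∑ β ∈ s, pw p β) + ∑ β ∈ t, pw p β := Finset.sum_union_inter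
  have h2 : ∑ β ∈ s ∪ t, pw p β ≤ 1 := by
    rw [← sum_pw (K := K) hp1]
    exact Finset.sum_le_sum_of_subset_of_nonneg (Finset.subset_univ _)
      (fun β _ _ => pw_nonneg hp0 β)
  linarith

theorem master (hp0 : ∀ r, 0 ≤ p r) (hp1 : ∑ r, p r = 1) (τ : κ → Equiv.Perm K)
    {δ ε : ℝ} (hδ : 0 < δ) (hε : 0 < ε) (hd : 0 < Fintype.card K) :
    (1 - (Fintype.card ι ^ Fintype.card κ : ℝ) *
          Real.sqrt ((badPairs τ).card) / Fintype.card K / δ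
        - (Fintype.card ι : ℝ) / (ε ^ 2 * Fintype.card K))
      * Real.exp ((Fintype.card K : ℝ) *
          ((-∑ r, p r * Real.log (p r)) - ε * ∑ r, |Real.log (p r)|))
    ≤ ((Finset.univ.filter (fun β : K → ι =>
        ∑ φ : κ → ι, |(∏ j, p (φ j)) -
          ((Finset.univ.filter fun k => ∀ j, β (τ j k) = φ j).card : ℝ) /
            (Fintype.card K : ℝ)| ≤ δ)).card : ℝ) := by
  classical
  have hdpos : (0:ℝ) < (Fintype.card K : ℝ) := by exact_mod_cast hd
  set d : ℝ := (Fintype.card K : ℝ) with hdd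
  set Y : (K → ι) → ℝ := fun β => ∑ φ : κ → ι, |(∏ j, p (φ j)) -
      ((Finset.univ.filter fun k => ∀ j, β (τ j k) = φ j).card : ℝ) / d| with hY
  set A : ℝ := (Fintype.card ι ^ Fintype.card κ : ℝ) *
      Real.sqrt ((badPairs τ).card) / d / δ with hA
  set B : ℝ := (Fintype.card ι : ℝ) / (ε ^ 2 * d) with hB
  -- Step 1: E Y is small
  have step1 : fexp p Y ≤ (Fintype.card ι ^ Fintype.card κ : ℝ) *
      Real.sqrt ((badPairs τ).card) / d := by
    have hφ : ∀ φ : κ → ι, fexp p (fun β => |(∏ j, p (φ j)) -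
        ((Finset.univ.filter fun k => ∀ j, β (τ j k) = φ j).card : ℝ) / d|)
        ≤ Real.sqrt ((badPairs τ).card) / d := by
      intro φ
      have hpt : ∀ β : K → ι, |(∏ j, p (φ j)) -
          ((Finset.univ.filter fun k => ∀ j, β (τ j k) = φ j).card : ℝ) / d|
          = (1/d) * |(∑ k, if (∀ j, β (τ j k) = φ j) then (1:ℝ) else 0) -
              d * ∏ j, p (φ j)| := by
        intro β
        rw [Finset.sum_boole, abs_sub_comm,
          show ((Finset.univ.filter fun k => ∀ j, β (τ j k) = φ j).card : ℝ) / d -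
            (∏ j, p (φ j))
          = (1/d) * (((Finset.univ.filter fun k => ∀ j, β (τ j k) = φ j).card : ℝ) -
            d * ∏ j, p (φ j)) by field_simp,
          abs_mul, abs_of_pos (by positivity : (0:ℝ) < 1/d)]
      calc fexp p (fun β => |(∏ j, p (φ j)) -
            ((Finset.univ.filter fun k => ∀ j, β (τ j k) = φ j).card : ℝ) / d|)
          = fexp p (fun β => (1/d) * |(∑ k, if (∀ j, β (τ j k) = φ j) then (1:ℝ) else 0) -
              d * ∏ j, p (φ j)|) :=
            Finset.sum_congr rfl fun β _ => by dsimp only; rw [hpt β]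
        _ = (1/d) * fexp p (fun β => |(∑ k, if (∀ j, β (τ j k) = φ j) then (1:ℝ) else 0) -
              d * ∏ j, p (φ j)|) := fexp_const_mul _ _
        _ ≤ (1/d) * Real.sqrt (fexp p (fun β =>
              ((∑ k, if (∀ j, β (τ j k) = φ j) then (1:ℝ) else 0) -
                d * ∏ j, p (φ j)) ^ 2)) :=
            mul_le_mul_of_nonneg_left (fexp_abs_le_sqrt hp0 hp1 _) (by positivity)
        _ ≤ (1/d) * Real.sqrt ((badPairs τ).card) :=
            mul_le_mul_of_nonneg_left
              (Real.sqrt_le_sqrt (moment_X hp0 hp1 τ φ)) (by positivity)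
        _ = Real.sqrt ((badPairs τ).card) / d := by ring
    calc fexp p Y = ∑ φ : κ → ι, fexp p (fun β => |(∏ j, p (φ j)) -
          ((Finset.univ.filter fun k => ∀ j, β (τ j k) = φ j).card : ℝ) / d|) :=
        fexp_sum Finset.univ _
      _ ≤ ∑ _φ : κ → ι, Real.sqrt ((badPairs τ).card) / d :=
        Finset.sum_le_sum fun φ _ => hφ φ
      _ = (Fintype.card (κ → ι) : ℝ) * (Real.sqrt ((badPairs τ).card) / d) := by
        rw [Finset.sum_const, Finset.card_univ, nsmul_eq_mul]
      _ = (Fintype.card ι ^ Fintype.card κ : ℝ) * Real.sqrt ((badPairs τ).card) / d := by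
        rw [Fintype.card_fun]
        push_cast
        ring
  -- Step 2: the good event has large mass
  have hmassGood : 1 - A ≤
      ∑ β ∈ Finset.univ.filter (fun β : K → ι => Y β ≤ δ), pw p β := by
    refine le_trans ?_ (markov hp0 hp1
      (fun β => Finset.sum_nonneg fun φ _ => abs_nonneg _) hδ)
    have h2 : fexp p Y / δ ≤ A := by
      rw [hA]
      gcongr
    linarith
  -- Step 3: the typical event has large mass
  set W : (K → ι) → ℝ := fun β => ∑ r : ι,
      ((∑ k : K, if β k = r then (1:ℝ) else 0) / d - p r) ^ 2 with hW
  have stepW : fexp p W ≤ (Fintype.card ι : ℝ) / d := by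
    have hr : ∀ r : ι, fexp p (fun β =>
        ((∑ k : K, if β k = r then (1:ℝ) else 0) / d - p r) ^ 2) ≤ 1 / d := by
      intro r
      have hpt : ∀ β : K → ι, ((∑ k : K, if β k = r then (1:ℝ) else 0) / d - p r) ^ 2
          = (1/d^2) * ((∑ k : K, if β k = r then (1:ℝ) else 0) - d * p r) ^ 2 := by
        intro β
        field_simp
      calc fexp p (fun β => ((∑ k : K, if β k = r then (1:ℝ) else 0) / d - p r) ^ 2)
          = fexp p (fun β =>
            (1/d^2) * ((∑ k : K, if β k = r then (1:ℝ) else 0) - d * p r) ^ 2) :=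
            Finset.sum_congr rfl fun β _ => by dsimp only; rw [hpt β]
        _ = (1/d^2) * fexp p (fun β =>
            ((∑ k : K, if β k = r then (1:ℝ) else 0) - d * p r) ^ 2) :=
            fexp_const_mul _ _
        _ ≤ (1/d^2) * d :=
            mul_le_mul_of_nonneg_left (moment_M hp0 hp1 r) (by positivity)
        _ = 1 / d := by field_simp
    calc fexp p W = ∑ r : ι, fexp p (fun β =>
          ((∑ k : K, if β k = r then (1:ℝ) else 0) / d - p r) ^ 2) :=
        fexp_sum Finset.univ _
      _ ≤ ∑ _r : ι, 1 / d := Finset.sum_le_sum fun r _ => hr r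
      _ = (Fintype.card ι : ℝ) / d := by
        rw [Finset.sum_const, Finset.card_univ, nsmul_eq_mul]
        ring
  have hmassTyp : 1 - B ≤
      ∑ β ∈ Finset.univ.filter (fun β : K → ι => W β ≤ ε ^ 2), pw p β := by
    refine le_trans ?_ (markov hp0 hp1
      (fun β => Finset.sum_nonneg fun r _ => sq_nonneg _) (by positivity : (0:ℝ) < ε ^ 2))
    have h2 : fexp p W / ε ^ 2 ≤ B := by
      rw [hB]
      calc fexp p W / ε ^ 2 ≤ ((Fintype.card ι : ℝ) / d) / ε ^ 2 := by gcongr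
        _ = (Fintype.card ι : ℝ) / (ε ^ 2 * d) := by
          rw [div_div]
          ring_nf
    linarith
  -- Step 4: mass of intersection
  have hmassInter : 1 - A - B ≤
      ∑ β ∈ (Finset.univ.filter (fun β : K → ι => Y β ≤ δ)
        ∩ Finset.univ.filter (fun β : K → ι => W β ≤ ε ^ 2)), pw p β := by
    have := mass_inter_ge hp0 hp1 (Finset.univ.filter (fun β : K → ι => Y β ≤ δ))
      (Finset.univ.filter (fun β : K → ι => W β ≤ ε ^ 2))
    linarith
  -- Step 5: pointwise bound on the typical event
  have hpw : ∀ β ∈ Finset.univ.filter (fun β : K → ι => W β ≤ ε ^ 2),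
      pw p β ≤ Real.exp (d * ((∑ r, p r * Real.log (p r)) +
        ε * ∑ r, |Real.log (p r)|)) := by
    intro β hβ
    have hWβ : W β ≤ ε ^ 2 := (Finset.mem_filter.mp hβ).2
    refine pw_le_typ hp0 hε.le β fun r => ?_
    have h1 : ((∑ k : K, if β k = r then (1:ℝ) else 0) / d - p r) ^ 2 ≤ ε ^ 2 := by
      refine le_trans ?_ hWβ
      exact Finset.single_le_sum (f := fun r : ι =>
        ((∑ k : K, if β k = r then (1:ℝ) else 0) / d - p r) ^ 2)
        (fun s _ => sq_nonneg _) (Finset.mem_univ r)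
    have h2 : |(∑ k : K, if β k = r then (1:ℝ) else 0) / d - p r| ≤ ε := by
      rw [← Real.sqrt_sq_eq_abs, ← Real.sqrt_sq hε.le]
      exact Real.sqrt_le_sqrt h1
    have h3 : ((Finset.univ.filter fun k => β k = r).card : ℝ)
        = ∑ k : K, if β k = r then (1:ℝ) else 0 := by
      rw [Finset.sum_boole]
    rw [h3]
    have h4 : (∑ k : K, if β k = r then (1:ℝ) else 0) - d * p r
        = d * ((∑ k : K, if β k = r then (1:ℝ) else 0) / d - p r) := by
      field_simp
    rw [h4, abs_mul, abs_of_pos hdpos, mul_comm (ε) d]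
    exact mul_le_mul_of_nonneg_left h2 hdpos.le
  -- Step 6: conclude
  have hcount : 1 - A - B ≤
      ((Finset.univ.filter (fun β : K → ι => Y β ≤ δ)).card : ℝ) *
        Real.exp (d * ((∑ r, p r * Real.log (p r)) + ε * ∑ r, |Real.log (p r)|)) := by
    refine le_trans hmassInter (le_trans (Finset.sum_le_sum fun β hβ =>
      hpw β (Finset.mem_of_mem_inter_right hβ)) ?_)
    rw [Finset.sum_const, nsmul_eq_mul]
    refine mul_le_mul_of_nonneg_right ?_ (Real.exp_pos _).le
    exact_mod_cast Finset.card_le_card (Finset.inter_subset_left)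
  have hfinal : (1 - A - B) * Real.exp (d *
      ((-∑ r, p r * Real.log (p r)) - ε * ∑ r, |Real.log (p r)|))
      ≤ ((Finset.univ.filter (fun β : K → ι => Y β ≤ δ)).card : ℝ) := by
    calc (1 - A - B) * Real.exp (d *
        ((-∑ r, p r * Real.log (p r)) - ε * ∑ r, |Real.log (p r)|))
        ≤ (((Finset.univ.filter (fun β : K → ι => Y β ≤ δ)).card : ℝ) *
          Real.exp (d * ((∑ r, p r * Real.log (p r)) + ε * ∑ r, |Real.log (p r)|))) *
          Real.exp (d * ((-∑ r, p r * Real.log (p r)) - ε * ∑ r, |Real.log (p r)|)) :=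
          mul_le_mul_of_nonneg_right hcount (Real.exp_pos _).le
      _ = ((Finset.univ.filter (fun β : K → ι => Y β ≤ δ)).card : ℝ) := by
          rw [mul_assoc, ← Real.exp_add]
          ring_nf
          rw [Real.exp_zero, mul_one]
  exact hfinal

end BowenAux
end Part6

namespace BowenAux
open Filter Finset

lemma ncard_setOf {α : Type*} [Fintype α] (P : α → Prop) [DecidablePred P] :
    ({x | P x} : Set α).ncard = (Finset.univ.filter P).card := by
  rw [Set.ncard_eq_toFinset_card']
  simp [Set.toFinset_setOf]

lemma log_nat_mono {m n : ℕ} (h : m ≤ n) (hn : 1 ≤ n) : Real.log m ≤ Real.log n := by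
  rcases Nat.eq_zero_or_pos m with hm | hm
  · rw [hm]
    simpa using Real.log_natCast_nonneg n
  · exact Real.log_le_log (by exact_mod_cast hm) (by exact_mod_cast h)

end BowenAux

section Part7a
open Filter Finset
variable {G : Type*} [Group G] [DecidableEq G]

lemma SoficApproxSeq.symm_agree_tendsto (S : SoficApproxSeq G) {g h : G} (hgh : g ≠ h) :
    Tendsto (fun i => ((Finset.univ.filter fun k : Fin (S.d i) =>
        (S.σ i g).symm k = (S.σ i h).symm k).card : ℝ) / S.d i) atTop (nhds 0) := by
  classical
  have hcardeq : ∀ i, (Finset.univ.filter fun k : Fin (S.d i) =>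
      (S.σ i g).symm k = (S.σ i h).symm k).card
      = (Finset.univ.filter fun m : Fin (S.d i) => S.σ i g m = S.σ i h m).card := by
    intro i
    have himg : (Finset.univ.filter fun k : Fin (S.d i) =>
        (S.σ i g).symm k = (S.σ i h).symm k)
        = (Finset.univ.filter fun m : Fin (S.d i) => S.σ i g m = S.σ i h m).image
            (S.σ i g) := by
      ext k
      simp only [Finset.mem_filter, Finset.mem_univ, true_and, Finset.mem_image]
      constructor
      · intro hk
        refine ⟨(S.σ i g).symm k, ?_, (S.σ i g).apply_symm_apply k⟩
        rw [Equiv.apply_symm_apply, hk, Equiv.apply_symm_apply]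
      · rintro ⟨m, hm, rfl⟩
        rw [Equiv.symm_apply_apply, hm, Equiv.symm_apply_apply]
    rw [himg, Finset.card_image_of_injective _ (S.σ i g).injective]
  have hfree := S.almost_free g h hgh
  have hncard : ∀ i, ({k : Fin (S.d i) | S.σ i g k ≠ S.σ i h k}.ncard : ℝ)
      = ((Finset.univ.filter fun m : Fin (S.d i) => ¬ (S.σ i g m = S.σ i h m)).card : ℝ) := by
    intro i
    norm_cast
    exact BowenAux.ncard_setOf _
  have hsplit : ∀ i, ((Finset.univ.filter fun k : Fin (S.d i) =>
      (S.σ i g).symm k = (S.σ i h).symm k).card : ℝ) / S.d i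
      = 1 - ((Finset.univ.filter fun m : Fin (S.d i) =>
          ¬ (S.σ i g m = S.σ i h m)).card : ℝ) / S.d i := by
    intro i
    have hd : (0:ℝ) < S.d i := by exact_mod_cast S.d_pos i
    have hadd : (Finset.univ.filter fun m : Fin (S.d i) => S.σ i g m = S.σ i h m).card
        + (Finset.univ.filter fun m : Fin (S.d i) => ¬ (S.σ i g m = S.σ i h m)).card
        = S.d i := by
      rw [Finset.card_filter_add_card_filter_not]
      simp
    rw [hcardeq i]
    field_simp
    rw [eq_sub_iff_add_eq, ← Nat.cast_add, hadd]
  have hlim : Tendsto (fun i => 1 - ((Finset.univ.filter fun m : Fin (S.d i) =>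
      ¬ (S.σ i g m = S.σ i h m)).card : ℝ) / S.d i) atTop (nhds 0) := by
    have h0 : Tendsto (fun i => ((Finset.univ.filter fun m : Fin (S.d i) =>
        ¬ (S.σ i g m = S.σ i h m)).card : ℝ) / S.d i) atTop (nhds 1) := by
      refine hfree.congr fun i => ?_
      rw [hncard i]
    have := (tendsto_const_nhds (x := (1:ℝ)) (f := atTop)).sub h0
    simpa using this
  exact Tendsto.congr (fun i => (hsplit i).symm) hlim

lemma SoficApproxSeq.bad_frac_tendsto (S : SoficApproxSeq G) (F : Finset G) :
    Tendsto (fun i => ((Finset.univ.filter fun k : Fin (S.d i) =>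
        ¬ Function.Injective fun j : ↥F => (S.σ i (j : G)).symm k).card : ℝ) / S.d i)
      atTop (nhds 0) := by
  classical
  set P : Finset (↥F × ↥F) := Finset.univ.filter fun jj : ↥F × ↥F => jj.1 ≠ jj.2 with hP
  have hsub : ∀ i, (Finset.univ.filter fun k : Fin (S.d i) =>
      ¬ Function.Injective fun j : ↥F => (S.σ i (j : G)).symm k)
      ⊆ P.biUnion (fun jj => Finset.univ.filter fun k : Fin (S.d i) =>
        (S.σ i (jj.1 : G)).symm k = (S.σ i (jj.2 : G)).symm k) := by
    intro i k hk
    have hk' : ¬ Function.Injective fun j : ↥F => (S.σ i (j : G)).symm k :=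
      (Finset.mem_filter.mp hk).2
    obtain ⟨a, b, hab, hne⟩ := Function.not_injective_iff.mp hk'
    refine Finset.mem_biUnion.mpr ⟨(a, b), ?_, ?_⟩
    · exact Finset.mem_filter.mpr ⟨Finset.mem_univ _, hne⟩
    · exact Finset.mem_filter.mpr ⟨Finset.mem_univ _, hab⟩
  have hbound : ∀ i, ((Finset.univ.filter fun k : Fin (S.d i) =>
      ¬ Function.Injective fun j : ↥F => (S.σ i (j : G)).symm k).card : ℝ) / S.d i
      ≤ ∑ jj ∈ P, ((Finset.univ.filter fun k : Fin (S.d i) =>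
        (S.σ i (jj.1 : G)).symm k = (S.σ i (jj.2 : G)).symm k).card : ℝ) / S.d i := by
    intro i
    have hd : (0:ℝ) < S.d i := by exact_mod_cast S.d_pos i
    rw [← Finset.sum_div]
    have hnum : ((Finset.univ.filter fun k : Fin (S.d i) =>
        ¬ Function.Injective fun j : ↥F => (S.σ i (j : G)).symm k).card : ℝ)
        ≤ ((∑ jj ∈ P, (Finset.univ.filter fun k : Fin (S.d i) =>
          (S.σ i (jj.1 : G)).symm k = (S.σ i (jj.2 : G)).symm k).card : ℕ) : ℝ) := by
      exact_mod_cast le_trans (Finset.card_le_card (hsub i)) (Finset.card_biUnion_le)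
    push_cast at hnum ⊢
    gcongr
  have hsum0 : Tendsto (fun i => ∑ jj ∈ P, ((Finset.univ.filter fun k : Fin (S.d i) =>
      (S.σ i (jj.1 : G)).symm k = (S.σ i (jj.2 : G)).symm k).card : ℝ) / S.d i)
      atTop (nhds 0) := by
    have := tendsto_finset_sum P (fun jj (hjj : jj ∈ P) =>
      S.symm_agree_tendsto (g := (jj.1 : G)) (h := (jj.2 : G))
        (Subtype.coe_injective.ne ((Finset.mem_filter.mp hjj).2)))
    simpa using this
  refine squeeze_zero (fun i => by positivity) hbound hsum0

end Part7a

/-- Bowen's lower bound: let `G` be a countable group with a sofic approximation sequence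
`Σ = {σᵢ : G → Sym(dᵢ)}`, `(X,μ)` a standard probability space and `R = (R_r)_{r ∈ ι}` a
finite measurable partition of `X`. Then for every nonempty finite `F ⊆ G` and `δ > 0`,
`limsup_i (1/dᵢ) log |{β : {1,…,dᵢ} → R : ∑_{φ ∈ R^F} |∏_{g∈F} μ(φ(g)) −`
`ζ(⋂_{g∈F} σᵢ(g)(β⁻¹(φ(g))))| ≤ δ}| ≥ H_μ(R)`, where `ζ` is the uniform probability
measure on `{1,…,dᵢ}`. -/
theorem le_limsup_log_card_good_maps {G : Type*} [Group G] [Countable G] [DecidableEq G]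
    (S : SoficApproxSeq G) {X : Type*} [MeasurableSpace X] [StandardBorelSpace X]
    (μ : Measure X) [IsProbabilityMeasure μ] {ι : Type*} [Fintype ι]
    (R : ι → Set X) (hmeas : ∀ r, MeasurableSet (R r))
    (hdisj : Pairwise (Function.onFun Disjoint R)) (hcover : (⋃ r, R r) = Set.univ)
    (F : Finset G) (hF : F.Nonempty) (δ : ℝ) (hδ : 0 < δ) :
    (-∑ r : ι, (μ (R r)).toReal * Real.log (μ (R r)).toReal) ≤
      Filter.limsup (fun i =>
        (1 / (S.d i : ℝ)) * Real.log
          (({β : Fin (S.d i) → ι |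
              ∑ φ : F → ι,
                |(∏ g : F, (μ (R (φ g))).toReal) -
                  ((⋂ g : F, (S.σ i g) '' (β ⁻¹' {φ g})).ncard : ℝ) / S.d i| ≤ δ}).ncard))
        atTop := by
  classical
  have hp0 : ∀ r : ι, 0 ≤ (μ (R r)).toReal := fun r => ENNReal.toReal_nonneg
  have hfin : ∀ r : ι, μ (R r) ≠ ⊤ := fun r => measure_ne_top μ _
  have hμsum : ∑ r : ι, μ (R r) = 1 := by
    calc ∑ r : ι, μ (R r) = ∑' r : ι, μ (R r) := (tsum_fintype _).symm
      _ = μ (⋃ r, R r) := (measure_iUnion hdisj hmeas).symm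
      _ = 1 := by rw [hcover, measure_univ]
  have hp1 : ∑ r : ι, (μ (R r)).toReal = 1 := by
    rw [← ENNReal.toReal_sum (fun r _ => hfin r), hμsum, ENNReal.toReal_one]
  have hXne : Nonempty X := by
    by_contra h
    have h1 : (Set.univ : Set X) = ∅ := Set.univ_eq_empty_iff.mpr (not_nonempty_iff.mp h)
    have h2 : μ Set.univ = 1 := measure_univ
    rw [h1, measure_empty] at h2
    exact zero_ne_one h2
  have hιne : Nonempty ι := by
    obtain ⟨x⟩ := hXne
    have hx : x ∈ ⋃ r, R r := by rw [hcover]; exact Set.mem_univ x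
    obtain ⟨r, -⟩ := Set.mem_iUnion.mp hx
    exact ⟨r⟩
  -- abbreviations
  set entH : ℝ := -∑ r : ι, (μ (R r)).toReal * Real.log (μ (R r)).toReal with hentH
  set C : ℝ := ∑ r : ι, |Real.log ((μ (R r)).toReal)| with hC
  have hC0 : 0 ≤ C := Finset.sum_nonneg fun r _ => abs_nonneg _
  -- rewrite the limsup function in Finset form
  have hfeq : (fun i =>
      (1 / (S.d i : ℝ)) * Real.log
        (({β : Fin (S.d i) → ι |
            ∑ φ : F → ι,
              |(∏ g : F, (μ (R (φ g))).toReal) -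
                ((⋂ g : F, (S.σ i g) '' (β ⁻¹' {φ g})).ncard : ℝ) / S.d i| ≤ δ}).ncard))
      = fun i =>
      (1 / (S.d i : ℝ)) * Real.log
        (((Finset.univ.filter (fun β : Fin (S.d i) → ι =>
            ∑ φ : ↥F → ι,
              |(∏ g : ↥F, (μ (R (φ g))).toReal) -
                ((Finset.univ.filter fun k : Fin (S.d i) =>
                  ∀ j : ↥F, β ((S.σ i (j : G)).symm k) = φ j).card : ℝ) / S.d i| ≤ δ)).card)) := by
    funext i
    congr 2
    have hiInter : ∀ (β : Fin (S.d i) → ι) (φ : ↥F → ι),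
        (⋂ g : ↥F, (S.σ i (g : G)) '' (β ⁻¹' {φ g}))
          = {k : Fin (S.d i) | ∀ j : ↥F, β ((S.σ i (j : G)).symm k) = φ j} := by
      intro β φ
      ext k
      simp only [Set.mem_iInter, Set.mem_setOf_eq, Set.mem_image_equiv, Set.mem_preimage,
        Set.mem_singleton_iff]
    have hPP : ∀ β : Fin (S.d i) → ι,
        (∑ φ : ↥F → ι,
          |(∏ g : ↥F, (μ (R (φ g))).toReal) -
            ((⋂ g : ↥F, (S.σ i (g : G)) '' (β ⁻¹' {φ g})).ncard : ℝ) / S.d i|)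
        = ∑ φ : ↥F → ι,
          |(∏ g : ↥F, (μ (R (φ g))).toReal) -
            ((Finset.univ.filter fun k : Fin (S.d i) =>
              ∀ j : ↥F, β ((S.σ i (j : G)).symm k) = φ j).card : ℝ) / S.d i| := by
      intro β
      refine Finset.sum_congr rfl fun φ _ => ?_
      rw [hiInter β φ, BowenAux.ncard_setOf]
    rw [show {β : Fin (S.d i) → ι |
          ∑ φ : F → ι,
            |(∏ g : F, (μ (R (φ g))).toReal) -
              ((⋂ g : F, (S.σ i g) '' (β ⁻¹' {φ g})).ncard : ℝ) / S.d i| ≤ δ}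
        = {β : Fin (S.d i) → ι |
          ∑ φ : ↥F → ι,
            |(∏ g : ↥F, (μ (R (φ g))).toReal) -
              ((Finset.univ.filter fun k : Fin (S.d i) =>
                ∀ j : ↥F, β ((S.σ i (j : G)).symm k) = φ j).card : ℝ) / S.d i| ≤ δ}
      from Set.ext fun β => by simp only [Set.mem_setOf_eq]; rw [hPP β]]
    rw [BowenAux.ncard_setOf]
  rw [hfeq]
  -- boundedness of the sequence from above
  have hcard1 : 1 ≤ Fintype.card ι := Fintype.card_pos
  have hbdd : Filter.IsBoundedUnder (· ≤ ·) atTop (fun i =>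
      (1 / (S.d i : ℝ)) * Real.log
        (((Finset.univ.filter (fun β : Fin (S.d i) → ι =>
            ∑ φ : ↥F → ι,
              |(∏ g : ↥F, (μ (R (φ g))).toReal) -
                ((Finset.univ.filter fun k : Fin (S.d i) =>
                  ∀ j : ↥F, β ((S.σ i (j : G)).symm k) = φ j).card : ℝ) / S.d i| ≤ δ)).card))) := by
    refine Filter.isBoundedUnder_of ⟨Real.log (Fintype.card ι), fun i => ?_⟩
    have hd : (0:ℝ) < S.d i := by exact_mod_cast S.d_pos i
    have hub : (Finset.univ.filter (fun β : Fin (S.d i) → ι =>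
        ∑ φ : ↥F → ι,
          |(∏ g : ↥F, (μ (R (φ g))).toReal) -
            ((Finset.univ.filter fun k : Fin (S.d i) =>
              ∀ j : ↥F, β ((S.σ i (j : G)).symm k) = φ j).card : ℝ) / S.d i| ≤ δ)).card
        ≤ Fintype.card ι ^ S.d i := by
      calc _ ≤ (Finset.univ : Finset (Fin (S.d i) → ι)).card := Finset.card_filter_le _ _
        _ = Fintype.card (Fin (S.d i) → ι) := Finset.card_univ
        _ = Fintype.card ι ^ S.d i := by rw [Fintype.card_fun, Fintype.card_fin]
    have hlog : Real.log ((Finset.univ.filter (fun β : Fin (S.d i) → ι =>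
        ∑ φ : ↥F → ι,
          |(∏ g : ↥F, (μ (R (φ g))).toReal) -
            ((Finset.univ.filter fun k : Fin (S.d i) =>
              ∀ j : ↥F, β ((S.σ i (j : G)).symm k) = φ j).card : ℝ) / S.d i| ≤ δ)).card)
        ≤ (S.d i : ℝ) * Real.log (Fintype.card ι) := by
      refine le_trans (BowenAux.log_nat_mono hub (Nat.one_le_pow _ _ ?_)) ?_
      · exact lt_of_lt_of_le one_pos hcard1
      · rw [Nat.cast_pow, Real.log_pow]
    calc (1 / (S.d i : ℝ)) * Real.log ((Finset.univ.filter (fun β : Fin (S.d i) → ι =>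
          ∑ φ : ↥F → ι,
            |(∏ g : ↥F, (μ (R (φ g))).toReal) -
              ((Finset.univ.filter fun k : Fin (S.d i) =>
                ∀ j : ↥F, β ((S.σ i (j : G)).symm k) = φ j).card : ℝ) / S.d i| ≤ δ)).card)
        ≤ (1 / (S.d i : ℝ)) * ((S.d i : ℝ) * Real.log (Fintype.card ι)) :=
          mul_le_mul_of_nonneg_left hlog (by positivity)
      _ = Real.log (Fintype.card ι) := by field_simp
  -- the eventual lower bound
  have key : ∀ ε : ℝ, 0 < ε → ∀ᶠ i in atTop,
      entH - ε * C - ε ≤ (1 / (S.d i : ℝ)) * Real.log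
        (((Finset.univ.filter (fun β : Fin (S.d i) → ι =>
            ∑ φ : ↥F → ι,
              |(∏ g : ↥F, (μ (R (φ g))).toReal) -
                ((Finset.univ.filter fun k : Fin (S.d i) =>
                  ∀ j : ↥F, β ((S.σ i (j : G)).symm k) = φ j).card : ℝ) / S.d i| ≤ δ)).card)) := by
    intro ε hε
    have hdR : Filter.Tendsto (fun i => (S.d i : ℝ)) atTop atTop :=
      tendsto_natCast_atTop_atTop.comp S.d_tendsto
    -- the typicality error term is eventually small
    have hB0 : Filter.Tendsto (fun i => (Fintype.card ι : ℝ) / (ε ^ 2 * S.d i))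
        atTop (nhds 0) :=
      Filter.Tendsto.div_atTop tendsto_const_nhds (Filter.Tendsto.const_mul_atTop
        (by positivity) hdR)
    have hBev : ∀ᶠ i in atTop, (Fintype.card ι : ℝ) / (ε ^ 2 * S.d i) ≤ 1/4 :=
      hB0.eventually_le_const (by norm_num)
    -- the concentration error term is eventually small
    have hbad := S.bad_frac_tendsto F
    have hu : Filter.Tendsto (fun i =>
        (2 * ((Finset.univ.filter fun k : Fin (S.d i) =>
          ¬ Function.Injective fun j : ↥F => (S.σ i (j : G)).symm k).card : ℝ)
          + (Fintype.card ↥F : ℝ) ^ 2) / S.d i) atTop (nhds 0) := by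
      have h1 := (hbad.const_mul 2).add
        (Filter.Tendsto.div_atTop (tendsto_const_nhds
          (x := ((Fintype.card ↥F : ℝ) ^ 2))) hdR)
      rw [mul_zero, add_zero] at h1
      refine h1.congr fun i => ?_
      rw [add_div, mul_div_assoc]
    have hmaj : Filter.Tendsto (fun i =>
        ((Fintype.card ι ^ Fintype.card ↥F : ℝ) / δ) * Real.sqrt
          ((2 * ((Finset.univ.filter fun k : Fin (S.d i) =>
            ¬ Function.Injective fun j : ↥F => (S.σ i (j : G)).symm k).card : ℝ)
            + (Fintype.card ↥F : ℝ) ^ 2) / S.d i)) atTop (nhds 0) := by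
      have := (hu.sqrt).const_mul ((Fintype.card ι ^ Fintype.card ↥F : ℝ) / δ)
      simpa using this
    have hmajev : ∀ᶠ i in atTop,
        ((Fintype.card ι ^ Fintype.card ↥F : ℝ) / δ) * Real.sqrt
          ((2 * ((Finset.univ.filter fun k : Fin (S.d i) =>
            ¬ Function.Injective fun j : ↥F => (S.σ i (j : G)).symm k).card : ℝ)
            + (Fintype.card ↥F : ℝ) ^ 2) / S.d i) ≤ 1/4 :=
      hmaj.eventually_le_const (by norm_num)
    have hlog2ev : ∀ᶠ i in atTop, Real.log 2 / (S.d i : ℝ) ≤ ε :=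
      (Filter.Tendsto.div_atTop tendsto_const_nhds hdR).eventually_le_const hε
    filter_upwards [hmajev, hBev, hlog2ev] with i hmajle hB hl
    have hd : (0:ℝ) < S.d i := by exact_mod_cast S.d_pos i
    -- apply the master counting bound
    have hm := BowenAux.master (p := fun r : ι => (μ (R r)).toReal) hp0 hp1
      (fun j : ↥F => (S.σ i (j : G)).symm) hδ hε
      (by rw [Fintype.card_fin]; exact S.d_pos i)
    simp only [Fintype.card_fin] at hm
    beta_reduce at hm
    rw [← hentH] at hm
    rw [← hC] at hm
    -- abbreviate the quantities
    set Bc : ℝ := ((Finset.univ.filter fun k : Fin (S.d i) =>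
      ¬ Function.Injective fun j : ↥F => (S.σ i (j : G)).symm k).card : ℝ) with hBc
    set BPc : ℝ := ((BowenAux.badPairs fun j : ↥F => (S.σ i (j : G)).symm).card : ℝ)
      with hBPc
    set NN : ℝ := (((Finset.univ.filter (fun β : Fin (S.d i) → ι =>
        ∑ φ : ↥F → ι,
          |(∏ g : ↥F, (μ (R (φ g))).toReal) -
            ((Finset.univ.filter fun k : Fin (S.d i) =>
              ∀ j : ↥F, β ((S.σ i (j : G)).symm k) = φ j).card : ℝ) / S.d i| ≤ δ)).card) : ℝ)
      with hNN
    set cF : ℝ := (Fintype.card ↥F : ℝ) with hcF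
    set cI : ℝ := (Fintype.card ι ^ Fintype.card ↥F : ℝ) with hcI
    clear_value Bc BPc NN cF cI
    -- bound the concentration error term using the bad-set fraction
    have hBc0 : 0 ≤ Bc := by rw [hBc]; positivity
    have hBPle : BPc ≤ ((2 * Bc + cF ^ 2) / S.d i) * (S.d i : ℝ) ^ 2 := by
      have h1 := BowenAux.badPairs_card_le (fun j : ↥F => (S.σ i (j : G)).symm)
      rw [Fintype.card_fin] at h1
      have h2 : BPc ≤ (2 * Bc + cF ^ 2) * (S.d i : ℝ) := by
        rw [hBPc, hBc, hcF]
        exact_mod_cast h1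
      have h3 : (2 * Bc + cF ^ 2) * (S.d i : ℝ)
          = ((2 * Bc + cF ^ 2) / S.d i) * (S.d i : ℝ) ^ 2 := by
        field_simp
      linarith
    have hsq : Real.sqrt BPc ≤ Real.sqrt ((2 * Bc + cF ^ 2) / S.d i) * (S.d i : ℝ) := by
      have hc2 : (0:ℝ) ≤ cF ^ 2 := sq_nonneg _
      have h4 : Real.sqrt BPc ≤ Real.sqrt (((2 * Bc + cF ^ 2) / S.d i) * (S.d i : ℝ) ^ 2) :=
        Real.sqrt_le_sqrt hBPle
      have h5 : Real.sqrt (((2 * Bc + cF ^ 2) / S.d i) * (S.d i : ℝ) ^ 2)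
          = Real.sqrt ((2 * Bc + cF ^ 2) / S.d i) * (S.d i : ℝ) := by
        rw [Real.sqrt_mul (by positivity), Real.sqrt_sq hd.le]
      linarith
    have hAle : cI * Real.sqrt BPc / (S.d i : ℝ) / δ ≤ 1/4 := by
      refine le_trans ?_ hmajle
      have hcI0 : 0 ≤ cI := by rw [hcI]; positivity
      have h6 : cI * Real.sqrt BPc / (S.d i : ℝ) / δ
          ≤ cI * (Real.sqrt ((2 * Bc + cF ^ 2) / S.d i) * (S.d i : ℝ)) / (S.d i : ℝ) / δ := by
        gcongr
      have h7 : cI * (Real.sqrt ((2 * Bc + cF ^ 2) / S.d i) * (S.d i : ℝ)) / (S.d i : ℝ) / δ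
          = cI / δ * Real.sqrt ((2 * Bc + cF ^ 2) / S.d i) := by
        field_simp
      linarith
    -- combine
    have hhalf : (1:ℝ)/2 ≤ 1 - cI * Real.sqrt BPc / (S.d i : ℝ) / δ
        - (Fintype.card ι : ℝ) / (ε ^ 2 * S.d i) := by linarith
    have hNhalf : (1/2 : ℝ) * Real.exp ((S.d i : ℝ) * (entH - ε * C)) ≤ NN :=
      le_trans (mul_le_mul_of_nonneg_right hhalf (Real.exp_pos _).le) hm
    have hNpos : (0:ℝ) < NN := lt_of_lt_of_le (by positivity) hNhalf
    have hlogN : (S.d i : ℝ) * (entH - ε * C) - Real.log 2 ≤ Real.log NN := by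
      have h8 := Real.log_le_log (by positivity) hNhalf
      rw [Real.log_mul (by norm_num) (Real.exp_ne_zero _), Real.log_exp,
        one_div, Real.log_inv] at h8
      linarith
    have h9 := mul_le_mul_of_nonneg_left hlogN
      (le_of_lt (by positivity : (0:ℝ) < 1 / (S.d i : ℝ)))
    have h10 : (1 / (S.d i : ℝ)) * ((S.d i : ℝ) * (entH - ε * C) - Real.log 2)
        = entH - ε * C - Real.log 2 / (S.d i : ℝ) := by
      field_simp
    have h11 : entH - ε * C - Real.log 2 / (S.d i : ℝ) ≤ (1 / (S.d i : ℝ)) * Real.log NN := by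
      linarith
    linarith
  -- conclude via the limsup
  refine le_of_forall_sub_le fun ε' hε' => ?_
  have hεpos : 0 < ε' / (C + 1) := div_pos hε' (by linarith)
  have hev := key (ε' / (C + 1)) hεpos
  have hle : entH - ε' ≤ entH - (ε' / (C + 1)) * C - (ε' / (C + 1)) := by
    have h2 : (ε' / (C + 1)) * C + (ε' / (C + 1)) = ε' := by
      field_simp
    linarith
  exact le_limsup_of_frequently_le
    ((hev.mono fun i hi => le_trans hle hi).frequently) hbdd
end

section
/- Let R be a finite set and let μ : R → [0,1] satisfy ∑_{r∈R} μ(r) = 1. Let F be a nonempty finite set, d a positive integer, σ : F → Sym({1,…,d}) a map into the permutation group of {1,…,d}, β : {1,…,d} → R a map, and τ ≥ 0. Suppose that ∑_{φ ∈ R^F} | ∏_{g∈F} μ(φ(g)) − ζ( ⋂_{g∈F} σ(g)(β^{-1}(φ(g))) ) | ≤ τ. Then for every subset S ⊆ R one has | ζ(β^{-1}(S)) − ∑_{r∈S} μ(r) | ≤ τ. -/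
open Finset

/-- Let `R` be a finite set and `μ : R → [0,1]` with `∑_r μ(r) = 1`. Let `F` be a nonempty
finite set, `d` a positive integer, `σ : F → Sym({1,…,d})`, `β : {1,…,d} → R` and `τ ≥ 0`.
If `∑_{φ ∈ R^F} |∏_{g∈F} μ(φ(g)) − ζ(⋂_{g∈F} σ(g)(β⁻¹(φ(g))))| ≤ τ`, then for every
`S ⊆ R` one has `|ζ(β⁻¹(S)) − ∑_{r∈S} μ(r)| ≤ τ`. Here `ζ(A) = |A|/d`. -/
theorem abs_empirical_sub_measure_le {R F : Type*} [Fintype R] [Fintype F] [DecidableEq F]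
    [Nonempty F] (μ : R → ℝ) (hμ0 : ∀ r, 0 ≤ μ r) (hμ1 : ∀ r, μ r ≤ 1)
    (hsum : ∑ r, μ r = 1) (d : ℕ) (hd : 0 < d) (σ : F → Equiv.Perm (Fin d))
    (β : Fin d → R) (τ : ℝ) (hτ : 0 ≤ τ)
    (h : ∑ φ : F → R,
        |(∏ g : F, μ (φ g)) -
          ((⋂ g : F, (σ g) '' (β ⁻¹' {φ g})).ncard : ℝ) / d| ≤ τ) :
    ∀ S : Finset R, |((β ⁻¹' (S : Set R)).ncard : ℝ) / d - ∑ r ∈ S, μ r| ≤ τ := by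
  intro S
  classical
  obtain ⟨g₀⟩ := ‹Nonempty F›
  set ψ : Fin d → (F → R) := fun k g => β ((σ g)⁻¹ k) with hψ
  have hfiber : ∀ φ : F → R, (⋂ g : F, (σ g) '' (β ⁻¹' {φ g})) = {k | ψ k = φ} := by
    intro φ
    ext k
    simp only [Set.mem_iInter, Set.mem_setOf_eq, funext_iff, hψ]
    refine forall_congr' fun g => ?_
    constructor
    · rintro ⟨x, hx, rfl⟩
      simpa using hx
    · intro hk
      exact ⟨(σ g)⁻¹ k, hk, by simp⟩
  have hncard : ∀ φ : F → R, (⋂ g : F, (σ g) '' (β ⁻¹' {φ g})).ncard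
      = (univ.filter fun k => ψ k = φ).card := by
    intro φ
    rw [hfiber, Set.ncard_eq_toFinset_card']
    congr 1
    ext k
    simp
  set T : Finset (F → R) := univ.filter (fun φ => φ g₀ ∈ S) with hT
  -- counting identity
  have key2 : ∑ φ ∈ T, ((⋂ g : F, (σ g) '' (β ⁻¹' {φ g})).ncard)
      = (β ⁻¹' (S : Set R)).ncard := by
    have h1 : (univ.filter fun k => ψ k ∈ T).card
        = ∑ φ ∈ T, (univ.filter fun k => ψ k = φ).card := by
      rw [Finset.card_eq_sum_card_fiberwise (f := ψ) (s := univ.filter fun k => ψ k ∈ T) (t := T)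
        (fun k hk => (Finset.mem_filter.mp hk).2)]
      refine Finset.sum_congr rfl fun φ hφ => ?_
      congr 1
      ext k
      simp only [Finset.mem_filter, Finset.mem_univ, true_and]
      constructor
      · rintro ⟨-, h2⟩; exact h2
      · intro h2; exact ⟨h2 ▸ hφ, h2⟩
    have h2 : (univ.filter fun k => ψ k ∈ T).card = (β ⁻¹' (S : Set R)).ncard := by
      rw [Set.ncard_eq_toFinset_card']
      refine Finset.card_bij' (fun k _ => (σ g₀)⁻¹ k) (fun k _ => (σ g₀) k) ?_ ?_ ?_ ?_
      · intro k hk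
        simp only [Finset.mem_filter, hT, Finset.mem_univ, true_and, hψ] at hk
        simpa using hk
      · intro k hk
        simp only [Set.mem_toFinset, Set.mem_preimage] at hk
        simpa [hT, hψ] using hk
      · intro k _; simp
      · intro k _; simp
    simp only [hncard]
    rw [← h1]
    exact h2
  have key2' : ∑ φ ∈ T, (((⋂ g : F, (σ g) '' (β ⁻¹' {φ g})).ncard : ℝ)) / d
      = ((β ⁻¹' (S : Set R)).ncard : ℝ) / d := by
    rw [← Finset.sum_div]
    congr 1
    exact_mod_cast key2
  -- probability identity
  have hsplit : ∀ φ : F → R, ∏ g : F, μ (φ g)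
      = μ (φ g₀) * ∏ j : {g : F // g ≠ g₀}, μ (φ (j : F)) := by
    intro φ
    rw [Fintype.prod_eq_mul_prod_compl g₀]
    congr 1
    rw [Finset.prod_subtype (p := fun g => g ≠ g₀) ({g₀}ᶜ : Finset F) (fun g => by simp) (fun g => μ (φ g))]
  have key1 : ∑ φ ∈ T, ∏ g : F, μ (φ g) = ∑ r ∈ S, μ r := by
    rw [← Finset.sum_fiberwise_of_maps_to (g := fun φ : F → R => φ g₀)
      (fun φ hφ => (Finset.mem_filter.mp hφ).2) (fun φ => ∏ g : F, μ (φ g))]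
    refine Finset.sum_congr rfl fun r hr => ?_
    have hfilt : T.filter (fun φ : F → R => φ g₀ = r)
        = univ.filter (fun φ : F → R => φ g₀ = r) := by
      ext φ
      simp only [Finset.mem_filter, hT, Finset.mem_univ, true_and]
      constructor
      · rintro ⟨-, h2⟩; exact h2
      · intro h2; exact ⟨h2 ▸ hr, h2⟩
    rw [hfilt]
    rw [Finset.sum_nbij' (i := fun (φ : F → R) => fun j : {g : F // g ≠ g₀} => φ (j : F))
      (j := fun ρ (g : F) => if hg : g = g₀ then r else ρ ⟨g, hg⟩)
      (t := univ) (g := fun ρ : {g : F // g ≠ g₀} → R => μ r * ∏ j, μ (ρ j))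
      (by intro φ hφ; simp)
      (by intro ρ hρ; simp)
      (by
        intro φ hφ
        simp only [Finset.mem_filter, Finset.mem_univ, true_and] at hφ
        funext g
        by_cases hg : g = g₀ <;> simp [hg, hφ])
      (by intro ρ hρ; funext j; simp [j.2])
      (by
        intro φ hφ
        simp only [Finset.mem_filter, Finset.mem_univ, true_and] at hφ
        rw [hsplit φ, hφ])]
    rw [← Finset.mul_sum]
    have hone : ∑ ρ : {g : F // g ≠ g₀} → R, ∏ j, μ (ρ j) = 1 := by
      rw [← Fintype.piFinset_univ, ← Finset.prod_univ_sum]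
      simp [hsum]
    rw [hone, mul_one]
  calc |((β ⁻¹' (S : Set R)).ncard : ℝ) / d - ∑ r ∈ S, μ r|
      = |∑ φ ∈ T, ((((⋂ g : F, (σ g) '' (β ⁻¹' {φ g})).ncard : ℝ)) / d
          - ∏ g : F, μ (φ g))| := by rw [Finset.sum_sub_distrib, key1, key2']
    _ ≤ ∑ φ ∈ T, |(((⋂ g : F, (σ g) '' (β ⁻¹' {φ g})).ncard : ℝ)) / d
          - ∏ g : F, μ (φ g)| := Finset.abs_sum_le_sum_abs _ _
    _ ≤ ∑ φ : F → R, |(((⋂ g : F, (σ g) '' (β ⁻¹' {φ g})).ncard : ℝ)) / d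
          - ∏ g : F, μ (φ g)| := Finset.sum_le_sum_of_subset_of_nonneg
            (Finset.subset_univ T) (fun φ _ _ => abs_nonneg _)
    _ ≤ τ := by
          refine le_trans (le_of_eq ?_) h
          exact Finset.sum_congr rfl fun φ _ => abs_sub_comm _ _
end

section
/- Let R be a finite set, π : R → Q a surjection onto a finite set Q, and μ : R → [0,1] with ∑_{r∈R} μ(r) = 1; let μ̄ : Q → [0,1] be defined by μ̄(q) = ∑_{r ∈ π^{-1}(q)} μ(r). Then for every κ > 0 there exist constants C > 0 and τ₀ > 0 such that for every τ ∈ (0, τ₀], every positive integer d, and every map β : {1,…,d} → R, the number of maps γ : {1,…,d} → R satisfying π(γ(a)) = π(β(a)) for all a ∈ {1,…,d} and | |γ^{-1}(r)|/d − μ(r) | ≤ τ for all r ∈ R is at most C · d^{|Q|} · (2τd + 1)^{|R|} · exp( d · ( H(μ) − H(μ̄) + κ ) ). -/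
open Finset

set_option maxHeartbeats 1600000

open Finset

private lemma negMulLog_mod (ε : ℝ) (hε : 0 < ε) :
    ∃ δ > 0, ∀ x y : ℝ, 0 ≤ x → x ≤ 1 → 0 ≤ y → y ≤ 1 →
      |x - y| ≤ δ → |Real.negMulLog x - Real.negMulLog y| ≤ ε := by
  have hu := (isCompact_Icc (a := (0:ℝ)) (b := 1)).uniformContinuousOn_of_continuous
    Real.continuous_negMulLog.continuousOn
  rw [Metric.uniformContinuousOn_iff_le] at hu
  obtain ⟨δ, hδ, h⟩ := hu ε hε
  refine ⟨δ, hδ, fun x y hx0 hx1 hy0 hy1 hxy => ?_⟩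
  have := h x ⟨hx0, hx1⟩ y ⟨hy0, hy1⟩ (by rwa [Real.dist_eq])
  rwa [Real.dist_eq] at this

private lemma fiber_sum_eq {R Q : Type*} [Fintype R] [DecidableEq R] [DecidableEq Q]
    (π : R → Q) {d : ℕ} (β γ₀ : Fin d → R) (hγ₀ : ∀ a, π (γ₀ a) = π (β a)) (q : Q) :
    ∑ r ∈ univ.filter (fun r => π r = q), (univ.filter fun a => γ₀ a = r).card
      = (univ.filter fun a => π (β a) = q).card := by
  rw [Finset.card_eq_sum_card_fiberwise (f := γ₀) (t := univ.filter fun r => π r = q)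
    (fun a ha => by simp only [Finset.mem_coe, Finset.mem_filter, Finset.mem_univ, true_and] at ha ⊢;
                    rw [hγ₀ a]; exact ha)]
  refine Finset.sum_congr rfl fun r hr => ?_
  have hq : π r = q := (Finset.mem_filter.1 hr).2
  congr 1
  rw [Finset.filter_filter]
  ext a
  simp only [Finset.mem_filter, Finset.mem_univ, true_and]
  constructor
  · exact fun h => ⟨by rw [← hγ₀ a, h, hq], h⟩
  · exact fun h => h.2

private lemma fiber_count_bound {R Q : Type*} [Fintype R] [DecidableEq R] [Fintype Q] [DecidableEq Q]
    (π : R → Q) {d : ℕ} (hd : 0 < d) (β γ₀ : Fin d → R) (hγ₀ : ∀ a, π (γ₀ a) = π (β a)) :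
    ((univ.filter fun γ : Fin d → R => (∀ a, π (γ a) = π (β a)) ∧
        ∀ r, (univ.filter fun a => γ a = r).card = (univ.filter fun a => γ₀ a = r).card).card : ℝ)
      ≤ Real.exp ((d : ℝ) *
          ((∑ r, Real.negMulLog (((univ.filter fun a => γ₀ a = r).card : ℝ) / d)) -
           (∑ q, Real.negMulLog (((univ.filter fun a => π (β a) = q).card : ℝ) / d)))) := by
  set n : R → ℕ := fun r => (univ.filter fun a => γ₀ a = r).card with hn
  set m : Q → ℕ := fun q => (univ.filter fun a => π (β a) = q).card with hm
  have hfib : ∀ q, ∑ r ∈ univ.filter (fun r => π r = q), n r = m q :=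
    fun q => fiber_sum_eq π β γ₀ hγ₀ q
  have hd' : (0:ℝ) < d := by exact_mod_cast hd
  have hnm : ∀ r, n r ≤ m (π r) := by
    intro r
    rw [← hfib (π r)]
    exact Finset.single_le_sum (f := n) (fun _ _ => Nat.zero_le _) (by simp)
  set p : R → ℝ := fun r => (n r : ℝ) / (m (π r)) with hp
  have hp0 : ∀ r, 0 ≤ p r := fun r => by positivity
  have hppos : ∀ r, 0 < n r → 0 < p r := by
    intro r h
    apply div_pos (by exact_mod_cast h)
    exact_mod_cast lt_of_lt_of_le h (hnm r)
  set W : ℝ := ∏ r, p r ^ n r with hW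
  have hW0 : 0 < W := by
    apply Finset.prod_pos
    intro r _
    rcases Nat.eq_zero_or_pos (n r) with h | h
    · simp [h]
    · exact pow_pos (hppos r h) _
  set S₀ := (univ.filter fun γ : Fin d → R => (∀ a, π (γ a) = π (β a)) ∧
        ∀ r, (univ.filter fun a => γ a = r).card = n r) with hS₀
  have hw : ∀ γ ∈ S₀, ∏ a, p (γ a) = W := by
    intro γ hγ
    obtain ⟨-, h1, h2⟩ := Finset.mem_filter.1 hγ
    calc ∏ a, p (γ a)
        = ∏ r, ∏ a ∈ univ.filter fun a => γ a = r, p (γ a) :=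
          (Finset.prod_fiberwise_of_maps_to (fun a _ => mem_univ (γ a)) _).symm
      _ = W := by
          rw [hW]
          refine Finset.prod_congr rfl fun r _ => ?_
          rw [Finset.prod_congr rfl
            (fun a ha => by rw [(Finset.mem_filter.1 ha).2] :
              ∀ a ∈ univ.filter (fun a => γ a = r), p (γ a) = p r),
            Finset.prod_const, h2 r]
  have hsub : S₀ ⊆ Fintype.piFinset fun a => univ.filter fun r => π r = π (β a) := by
    intro γ hγ
    rw [Fintype.mem_piFinset]
    intro a
    simp only [Finset.mem_filter, Finset.mem_univ, true_and]
    exact (Finset.mem_filter.1 hγ).2.1 a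
  have hsum1 : ∑ γ ∈ Fintype.piFinset (fun a : Fin d => univ.filter fun r => π r = π (β a)),
      ∏ a, p (γ a) = 1 := by
    rw [← Finset.prod_univ_sum]
    refine Finset.prod_eq_one fun a _ => ?_
    have hmq : 0 < m (π (β a)) := Finset.card_pos.2 ⟨a, by simp⟩
    have e : ∑ r ∈ univ.filter (fun r => π r = π (β a)), p r
        = (∑ r ∈ univ.filter (fun r => π r = π (β a)), (n r : ℝ)) / (m (π (β a))) := by
      rw [Finset.sum_div]
      refine Finset.sum_congr rfl fun r hr => ?_
      rw [hp]
      simp only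
      rw [(Finset.mem_filter.1 hr).2]
    rw [e, ← Nat.cast_sum, hfib]
    exact div_self (by exact_mod_cast hmq.ne')
  have hcount : (S₀.card : ℝ) * W ≤ 1 := by
    rw [← hsum1]
    calc (S₀.card : ℝ) * W = ∑ γ ∈ S₀, ∏ a, p (γ a) := by
          rw [Finset.sum_congr rfl hw, Finset.sum_const, nsmul_eq_mul]
      _ ≤ _ := Finset.sum_le_sum_of_subset_of_nonneg hsub
          (fun γ _ _ => Finset.prod_nonneg fun a _ => hp0 _)
  have hcard : (S₀.card : ℝ) ≤ 1 / W := (le_div_iff₀ hW0).2 hcount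
  have hnd : ∑ r, n r = d := by
    have h := Finset.card_eq_sum_card_fiberwise
      (fun (a : Fin d) (_ : a ∈ univ) => Finset.mem_univ (γ₀ a))
    simp only [Finset.card_univ, Fintype.card_fin] at h
    exact h.symm
  have hmd : ∑ q, m q = d := by
    have h := Finset.card_eq_sum_card_fiberwise
      (fun (a : Fin d) (_ : a ∈ univ) => Finset.mem_univ (π (β a)))
    simp only [Finset.card_univ, Fintype.card_fin] at h
    exact h.symm
  have hlogW : Real.log W = (∑ r, (n r : ℝ) * Real.log (n r))
      - (∑ q, (m q : ℝ) * Real.log (m q)) := by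
    rw [hW, Real.log_prod]
    · have h1 : ∀ r ∈ univ, Real.log (p r ^ n r)
          = (n r : ℝ) * Real.log (n r) - (n r : ℝ) * Real.log (m (π r)) := by
        intro r _
        rw [Real.log_pow]
        rcases Nat.eq_zero_or_pos (n r) with h | h
        · simp [h]
        · have hm0 : 0 < m (π r) := lt_of_lt_of_le h (hnm r)
          rw [hp]
          simp only
          rw [Real.log_div (by exact_mod_cast h.ne') (by exact_mod_cast hm0.ne')]
          ring
      rw [Finset.sum_congr rfl h1, Finset.sum_sub_distrib]
      congr 1
      rw [← Finset.sum_fiberwise_of_maps_to (g := π) (fun (r : R) (_ : r ∈ univ) => Finset.mem_univ (π r))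
        (fun r => (n r : ℝ) * Real.log (m (π r)))]
      refine Finset.sum_congr rfl fun q _ => ?_
      rw [Finset.sum_congr rfl
        (fun r hr => by rw [(Finset.mem_filter.1 hr).2] :
          ∀ r ∈ univ.filter (fun r => π r = q),
            (n r : ℝ) * Real.log (m (π r)) = (n r : ℝ) * Real.log (m q)),
        ← Finset.sum_mul, ← Nat.cast_sum, hfib q]
    · intro r _
      rcases Nat.eq_zero_or_pos (n r) with h | h
      · simp [h]
      · exact (pow_pos (hppos r h) _).ne'
  have key : ∀ (k : ℕ), (d:ℝ) * Real.negMulLog ((k:ℝ)/d)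
      = -((k:ℝ) * Real.log k) + (k:ℝ) * Real.log d := by
    intro k
    rcases Nat.eq_zero_or_pos k with h | h
    · simp [h, Real.negMulLog]
    · rw [Real.negMulLog, Real.log_div (by exact_mod_cast h.ne') hd'.ne']
      field_simp
      ring
  have hRHS : (d:ℝ) * ((∑ r, Real.negMulLog ((n r : ℝ)/d)) - (∑ q, Real.negMulLog ((m q : ℝ)/d)))
      = - Real.log W := by
    rw [hlogW, mul_sub, Finset.mul_sum, Finset.mul_sum]
    simp only [key]
    rw [Finset.sum_add_distrib, Finset.sum_add_distrib, ← Finset.sum_mul, ← Finset.sum_mul,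
      ← Nat.cast_sum, ← Nat.cast_sum, hnd, hmd]
    simp only [Finset.sum_neg_distrib]
    ring
  show (S₀.card : ℝ) ≤ Real.exp ((d:ℝ) *
    ((∑ r, Real.negMulLog ((n r : ℝ)/d)) - (∑ q, Real.negMulLog ((m q : ℝ)/d))))
  rw [hRHS, Real.exp_neg, Real.exp_log hW0, ← one_div]
  exact hcard
/-- Let `R` be a finite set, `π : R → Q` a surjection onto a finite set `Q`, and
`μ : R → [0,1]` a probability vector; let `μ̄(q) = ∑_{r ∈ π⁻¹(q)} μ(r)`. Then for every
`κ > 0` there exist `C > 0` and `τ₀ > 0` such that for every `τ ∈ (0, τ₀]`, every positive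
integer `d` and every `β : {1,…,d} → R`, the number of maps `γ : {1,…,d} → R` with
`π ∘ γ = π ∘ β` and `||γ⁻¹(r)|/d − μ(r)| ≤ τ` for all `r` is at most
`C · d^{|Q|} · (2τd + 1)^{|R|} · exp(d·(H(μ) − H(μ̄) + κ))`, where `H` denotes Shannon
entropy with natural logarithm. -/
theorem card_fibrewise_close_maps_le {R Q : Type*} [Fintype R] [Fintype Q] [DecidableEq Q]
    (π : R → Q) (hπ : Function.Surjective π) (μ : R → ℝ) (hμ0 : ∀ r, 0 ≤ μ r)
    (hμ1 : ∀ r, μ r ≤ 1) (hsum : ∑ r, μ r = 1) (κ : ℝ) (hκ : 0 < κ) :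
    ∃ C τ₀ : ℝ, 0 < C ∧ 0 < τ₀ ∧ ∀ τ : ℝ, 0 < τ → τ ≤ τ₀ → ∀ d : ℕ, 0 < d →
      ∀ β : Fin d → R,
      (({γ : Fin d → R | (∀ a, π (γ a) = π (β a)) ∧
          ∀ r : R, |((γ ⁻¹' {r}).ncard : ℝ) / d - μ r| ≤ τ}).ncard : ℝ) ≤
        C * (d : ℝ) ^ (Fintype.card Q) * (2 * τ * d + 1) ^ (Fintype.card R) *
          Real.exp ((d : ℝ) *
            ((∑ r, Real.negMulLog (μ r)) -
              (∑ q, Real.negMulLog (∑ r ∈ univ.filter fun r => π r = q, μ r)) + κ)) := by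
  classical
  set ε : ℝ := κ / (Fintype.card R + Fintype.card Q + 1) with hε_def
  have hε : 0 < ε := div_pos hκ (by positivity)
  have hεκ : ((Fintype.card R : ℝ) + Fintype.card Q + 1) * ε = κ := by
    rw [hε_def]
    field_simp
  obtain ⟨δ, hδ, hmod⟩ := negMulLog_mod ε hε
  refine ⟨1, δ / (Fintype.card R + 1), one_pos, by positivity, ?_⟩
  intro τ hτ hττ₀ d hd β
  have hd' : (0:ℝ) < d := by exact_mod_cast hd
  have hcR : (0:ℝ) ≤ Fintype.card R := Nat.cast_nonneg _
  have hτδ : τ ≤ δ := by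
    refine hττ₀.trans ?_
    rw [div_le_iff₀ (by positivity)]
    nlinarith [hδ.le]
  have hτRδ : (Fintype.card R : ℝ) * τ ≤ δ := by
    have h1 := mul_le_mul_of_nonneg_left hττ₀ hcR
    have hx : δ / ((Fintype.card R : ℝ) + 1) * ((Fintype.card R : ℝ) + 1) = δ :=
      div_mul_cancel₀ _ (by positivity)
    have hxpos : 0 ≤ δ / ((Fintype.card R : ℝ) + 1) := by positivity
    nlinarith [h1]
  set n : (Fin d → R) → R → ℕ := fun γ r => (univ.filter fun a => γ a = r).card with hn_def
  set m : Q → ℕ := fun q => (univ.filter fun a => π (β a) = q).card with hm_def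
  have hpre : ∀ (γ : Fin d → R) (r : R), ((γ ⁻¹' {r}).ncard : ℝ) = (n γ r : ℝ) := by
    intro γ r
    have he : γ ⁻¹' {r} = ↑(univ.filter fun a => γ a = r) := by ext a; simp
    rw [he, Set.ncard_coe_finset]
  set S : Finset (Fin d → R) := univ.filter fun γ => (∀ a, π (γ a) = π (β a)) ∧
      ∀ r, |((n γ r : ℝ)) / d - μ r| ≤ τ with hS_def
  have hset : {γ : Fin d → R | (∀ a, π (γ a) = π (β a)) ∧
      ∀ r : R, |((γ ⁻¹' {r}).ncard : ℝ) / d - μ r| ≤ τ} = ↑S := by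
    ext γ
    simp only [hS_def, Set.mem_setOf_eq, Finset.coe_filter, Finset.mem_univ, true_and, hpre]
  rw [hset, Set.ncard_coe_finset]
  set E : ℝ := Real.exp ((d : ℝ) *
    ((∑ r, Real.negMulLog (μ r)) -
      (∑ q, Real.negMulLog (∑ r ∈ univ.filter fun r => π r = q, μ r)) + κ)) with hE_def
  have hE0 : 0 < E := by rw [hE_def]; exact Real.exp_pos _
  set N : Finset (R → ℕ) := Fintype.piFinset fun r =>
    Finset.Icc ⌈(d:ℝ) * μ r - d * τ⌉₊ ⌊(d:ℝ) * μ r + d * τ⌋₊ with hN_def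
  have hmapsto : ∀ γ ∈ S, n γ ∈ N := by
    intro γ hγ
    rw [hN_def, Fintype.mem_piFinset]
    intro r
    have hγ2 := (Finset.mem_filter.1 hγ).2.2 r
    rw [abs_le] at hγ2
    have hne : ((n γ r : ℝ) / d) * d = (n γ r : ℝ) := div_mul_cancel₀ _ hd'.ne'
    rw [Finset.mem_Icc]
    constructor
    · apply Nat.ceil_le.2
      nlinarith [hγ2.1]
    · apply Nat.le_floor
      nlinarith [hγ2.2]
  have hNcard : (N.card : ℝ) ≤ (2 * τ * d + 1) ^ (Fintype.card R) := by
    rw [hN_def, Fintype.card_piFinset, ← Finset.card_univ (α := R), ← Finset.prod_const]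
    push_cast
    refine Finset.prod_le_prod (fun r _ => by positivity) (fun r _ => ?_)
    rw [Nat.card_Icc]
    rcases le_or_gt ⌈(d:ℝ) * μ r - d * τ⌉₊ (⌊(d:ℝ) * μ r + d * τ⌋₊ + 1) with h | h
    · rw [Nat.cast_sub h]
      have hb : (⌊(d:ℝ) * μ r + d * τ⌋₊ : ℝ) ≤ (d:ℝ) * μ r + d * τ :=
        Nat.floor_le (by nlinarith [mul_nonneg hd'.le (hμ0 r), mul_nonneg hd'.le hτ.le])
      have ha : (d:ℝ) * μ r - d * τ ≤ (⌈(d:ℝ) * μ r - d * τ⌉₊ : ℝ) := Nat.le_ceil _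
      push_cast
      nlinarith
    · rw [Nat.sub_eq_zero_of_le (by omega)]
      simp only [Nat.cast_zero]
      positivity
  have hfibbd : ∀ v : R → ℕ, ((S.filter fun γ => n γ = v).card : ℝ) ≤ E := by
    intro v
    rcases Finset.eq_empty_or_nonempty (S.filter fun γ => n γ = v) with h | ⟨γ₀, hγ₀⟩
    · rw [h]
      simp only [Finset.card_empty, Nat.cast_zero]
      exact hE0.le
    · obtain ⟨hγ₀S, hγ₀v⟩ := Finset.mem_filter.1 hγ₀
      obtain ⟨-, hπγ₀, hclose⟩ := Finset.mem_filter.1 hγ₀S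
      have hsub : (S.filter fun γ => n γ = v) ⊆
          univ.filter fun γ : Fin d → R => (∀ a, π (γ a) = π (β a)) ∧
            ∀ r, (univ.filter fun a => γ a = r).card = (univ.filter fun a => γ₀ a = r).card := by
        intro γ hγ
        obtain ⟨hγS, hγv⟩ := Finset.mem_filter.1 hγ
        obtain ⟨-, hπγ, -⟩ := Finset.mem_filter.1 hγS
        refine Finset.mem_filter.2 ⟨Finset.mem_univ _, hπγ, fun r => ?_⟩
        show n γ r = n γ₀ r
        rw [hγv, hγ₀v]
      have hbound := fiber_count_bound π hd β γ₀ hπγ₀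
      refine le_trans (le_trans (by exact_mod_cast Finset.card_le_card hsub) hbound) ?_
      rw [hE_def, Real.exp_le_exp]
      apply mul_le_mul_of_nonneg_left _ hd'.le
      have hfibsum : ∀ q, ∑ r ∈ univ.filter (fun r => π r = q), n γ₀ r = m q :=
        fun q => fiber_sum_eq π β γ₀ hπγ₀ q
      have hnr_le : ∀ r, (n γ₀ r : ℝ) ≤ d := by
        intro r
        have h2 : n γ₀ r ≤ d := by
          have := Finset.card_filter_le (univ : Finset (Fin d)) (fun a => γ₀ a = r)
          simpa using this
        exact_mod_cast h2
      have hmq_le : ∀ q, (m q : ℝ) ≤ d := by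
        intro q
        have h2 : m q ≤ d := by
          have := Finset.card_filter_le (univ : Finset (Fin d)) (fun a => π (β a) = q)
          simpa using this
        exact_mod_cast h2
      have hHR : (∑ r, Real.negMulLog ((n γ₀ r : ℝ) / d)) ≤
          (∑ r, Real.negMulLog (μ r)) + (Fintype.card R : ℝ) * ε := by
        have hterm : ∀ r ∈ (univ : Finset R),
            Real.negMulLog ((n γ₀ r : ℝ) / d) ≤ Real.negMulLog (μ r) + ε := by
          intro r _
          have h1 := hmod ((n γ₀ r : ℝ)/d) (μ r) (by positivity)
            (by rw [div_le_one hd']; exact hnr_le r) (hμ0 r) (hμ1 r)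
            ((hclose r).trans hτδ)
          have h2 := abs_le.1 h1
          linarith [h2.1, h2.2]
        calc (∑ r, Real.negMulLog ((n γ₀ r : ℝ) / d))
            ≤ ∑ r, (Real.negMulLog (μ r) + ε) := Finset.sum_le_sum hterm
          _ = _ := by
              rw [Finset.sum_add_distrib, Finset.sum_const, Finset.card_univ, nsmul_eq_mul]
      have hHQ : (∑ q, Real.negMulLog (∑ r ∈ univ.filter fun r => π r = q, μ r)) ≤
          (∑ q, Real.negMulLog ((m q : ℝ) / d)) + (Fintype.card Q : ℝ) * ε := by
        have hterm : ∀ q ∈ (univ : Finset Q),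
            Real.negMulLog (∑ r ∈ univ.filter fun r => π r = q, μ r) ≤
              Real.negMulLog ((m q : ℝ) / d) + ε := by
          intro q _
          have hμb0 : 0 ≤ ∑ r ∈ univ.filter fun r => π r = q, μ r :=
            Finset.sum_nonneg fun r _ => hμ0 r
          have hμb1 : (∑ r ∈ univ.filter fun r => π r = q, μ r) ≤ 1 := by
            rw [← hsum]
            exact Finset.sum_le_sum_of_subset_of_nonneg (Finset.filter_subset _ _)
              (fun r _ _ => hμ0 r)
          have hdiff : |(m q : ℝ)/d - (∑ r ∈ univ.filter fun r => π r = q, μ r)| ≤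
              (Fintype.card R : ℝ) * τ := by
            have he : (m q : ℝ)/d - (∑ r ∈ univ.filter fun r => π r = q, μ r)
                = ∑ r ∈ univ.filter (fun r => π r = q), ((n γ₀ r : ℝ)/d - μ r) := by
              rw [Finset.sum_sub_distrib, ← Finset.sum_div, ← Nat.cast_sum, hfibsum q]
            rw [he]
            calc |∑ r ∈ univ.filter (fun r => π r = q), ((n γ₀ r : ℝ)/d - μ r)|
                ≤ ∑ r ∈ univ.filter (fun r => π r = q), |(n γ₀ r : ℝ)/d - μ r| :=
                  Finset.abs_sum_le_sum_abs _ _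
              _ ≤ ∑ _r ∈ univ.filter (fun r => π r = q), τ :=
                  Finset.sum_le_sum fun r _ => hclose r
              _ = ((univ.filter (fun r => π r = q)).card : ℝ) * τ := by
                  rw [Finset.sum_const, nsmul_eq_mul]
              _ ≤ (Fintype.card R : ℝ) * τ := by
                  apply mul_le_mul_of_nonneg_right _ hτ.le
                  exact_mod_cast (Finset.card_filter_le _ _).trans_eq Finset.card_univ
          have h1 := hmod ((m q : ℝ)/d) (∑ r ∈ univ.filter fun r => π r = q, μ r)
            (by positivity) (by rw [div_le_one hd']; exact hmq_le q) hμb0 hμb1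
            (hdiff.trans hτRδ)
          have h2 := abs_le.1 h1
          linarith [h2.1, h2.2]
        calc (∑ q, Real.negMulLog (∑ r ∈ univ.filter fun r => π r = q, μ r))
            ≤ ∑ q, (Real.negMulLog ((m q : ℝ) / d) + ε) := Finset.sum_le_sum hterm
          _ = _ := by
              rw [Finset.sum_add_distrib, Finset.sum_const, Finset.card_univ, nsmul_eq_mul]
      have hcQ : (0:ℝ) ≤ Fintype.card Q := Nat.cast_nonneg _
      linarith [hHR, hHQ, hε.le]
  calc (S.card : ℝ) = ∑ v ∈ N, ((S.filter fun γ => n γ = v).card : ℝ) := by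
        exact_mod_cast Finset.card_eq_sum_card_fiberwise hmapsto
    _ ≤ ∑ _v ∈ N, E := Finset.sum_le_sum fun v _ => hfibbd v
    _ = (N.card : ℝ) * E := by rw [Finset.sum_const, nsmul_eq_mul]
    _ ≤ (2 * τ * d + 1) ^ (Fintype.card R) * E :=
        mul_le_mul_of_nonneg_right hNcard hE0.le
    _ ≤ _ := by
        rw [one_mul]
        have h0 : (0:ℝ) ≤ 2 * τ * (d:ℝ) + 1 := by
          nlinarith [mul_nonneg (mul_nonneg (by norm_num : (0:ℝ) ≤ 2) hτ.le) hd'.le]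
        have h1 : (1:ℝ) ≤ (d:ℝ) ^ (Fintype.card Q) :=
          one_le_pow₀ (by exact_mod_cast hd)
        calc (2 * τ * (d:ℝ) + 1) ^ (Fintype.card R) * E
            = 1 * ((2 * τ * (d:ℝ) + 1) ^ (Fintype.card R) * E) := (one_mul _).symm
          _ ≤ (d:ℝ) ^ (Fintype.card Q) * ((2 * τ * (d:ℝ) + 1) ^ (Fintype.card R) * E) :=
              mul_le_mul_of_nonneg_right h1 (mul_nonneg (pow_nonneg h0 _) hE0.le)
          _ = (d:ℝ) ^ (Fintype.card Q) * (2 * τ * (d:ℝ) + 1) ^ (Fintype.card R) * E :=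
              (mul_assoc _ _ _).symm
end
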